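/- arXiv:1607.08258 — 8 statements merged into one kernel-verified Lean document; each statement's English description precedes it below -/
import Mathlib

section
/- For any simple graph G on n vertices, √(s⁺(G)) + √(s⁺(complement of G)) ≥ n − 1. -/
open Finset SimpleGraph

/-- The adjacency matrix of a simple graph (over `ℝ`) is Hermitian. -/
theorem adjHerm {V : Type*} [Fintype V] [DecidableEq V] (G : SimpleGraph V)
    [DecidableRel G.Adj] : (G.adjMatrix ℝ).IsHermitian :=
  by rw [Matrix.IsHermitian, Matrix.conjTranspose_eq_transpose_of_trivial]; exact isSymm_adjMatrix G

open scoped Classical in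
/-- The eigenvalues of the adjacency matrix of `G`. -/
noncomputable def adjEig {V : Type*} [Fintype V] [DecidableEq V] (G : SimpleGraph V) : V → ℝ :=
  (adjHerm G).eigenvalues

/-- `s⁺(G)`: the sum of the squares of the positive adjacency eigenvalues. -/
noncomputable def sPos {V : Type*} [Fintype V] [DecidableEq V] (G : SimpleGraph V) : ℝ :=
  ∑ i, if 0 < adjEig G i then (adjEig G i) ^ 2 else 0

/-- `s⁻(G)`: the sum of the squares of the negative adjacency eigenvalues. -/
noncomputable def sNeg {V : Type*} [Fintype V] [DecidableEq V] (G : SimpleGraph V) : ℝ :=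
  ∑ i, if adjEig G i < 0 then (adjEig G i) ^ 2 else 0

/-- The spectral radius (largest adjacency eigenvalue) of `G`. -/
noncomputable def specRad {V : Type*} [Fintype V] [DecidableEq V] (G : SimpleGraph V) : ℝ :=
  ⨆ i, adjEig G i

open scoped Classical in
/-- The number of edges of `G`. -/
noncomputable def numEdges {V : Type*} [Fintype V] (G : SimpleGraph V) : ℕ :=
  G.edgeFinset.card

open scoped Classical in
/-- The Randić index `R(G) = ∑_{ij ∈ E} 1/√(dᵢ·dⱼ)`, written as half the sum
over ordered adjacent pairs. -/
noncomputable def randic {V : Type*} [Fintype V] (G : SimpleGraph V) : ℝ :=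
  (1 / 2) * ∑ i, ∑ j,
    if G.Adj i j then 1 / Real.sqrt ((G.degree i : ℝ) * (G.degree j : ℝ)) else 0

open Matrix in
lemma quad_le_sqrt_aux {m : Type*} [Fintype m] [DecidableEq m] {A : Matrix m m ℝ}
    (hA : A.IsHermitian) (x : m → ℝ) :
    x ⬝ᵥ (A *ᵥ x) ≤
      Real.sqrt (∑ i, if 0 < hA.eigenvalues i then hA.eigenvalues i ^ 2 else 0) * (x ⬝ᵥ x) := by
  set U : Matrix m m ℝ := (hA.eigenvectorUnitary : Matrix m m ℝ) with hU
  set μ := hA.eigenvalues with hμ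
  set c : m → ℝ := star U *ᵥ x with hc
  have hstar : (star U : Matrix m m ℝ) = Uᵀ := by
    ext i j; simp [Matrix.star_apply]
  have hcx : x ᵥ* U = c := by
    rw [hc, hstar, ← Matrix.vecMul_transpose, Matrix.transpose_transpose]
  have hUU : U * star U = 1 := (Matrix.mem_unitaryGroup_iff.mp hA.eigenvectorUnitary.2)
  have hquad : x ⬝ᵥ (A *ᵥ x) = ∑ i, μ i * c i ^ 2 := by
    conv_lhs => rw [hA.spectral_theorem, Unitary.conjStarAlgAut_apply]
    rw [← mulVec_mulVec, ← mulVec_mulVec, dotProduct_mulVec x U, hcx]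
    have : (diagonal (RCLike.ofReal ∘ μ) : Matrix m m ℝ) = diagonal μ := by
      congr 1
    rw [this]
    simp only [dotProduct, mulVec_diagonal]
    exact Finset.sum_congr rfl fun i _ => by ring
  have hsum : ∑ i, c i ^ 2 = x ⬝ᵥ x := by
    have h1 : c ⬝ᵥ c = x ⬝ᵥ x := by
      nth_rewrite 2 [hc]
      rw [dotProduct_mulVec, hstar, vecMul_transpose, hc, mulVec_mulVec, hUU, one_mulVec]
    simpa [dotProduct, sq] using h1
  rw [hquad, ← hsum]
  calc ∑ i, μ i * c i ^ 2
      ≤ ∑ i, (if 0 < μ i then μ i else 0) * c i ^ 2 := by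
        refine Finset.sum_le_sum fun i _ => ?_
        by_cases h : 0 < μ i
        · simp [h]
        · simp only [h, if_false, zero_mul]
          exact mul_nonpos_of_nonpos_of_nonneg (le_of_not_gt h) (sq_nonneg _)
    _ ≤ Real.sqrt (∑ i, (if 0 < μ i then μ i else 0) ^ 2) *
          Real.sqrt (∑ i, (c i ^ 2) ^ 2) := Real.sum_mul_le_sqrt_mul_sqrt _ _ _
    _ ≤ Real.sqrt (∑ i, if 0 < μ i then μ i ^ 2 else 0) * (∑ i, c i ^ 2) := by
        gcongr ?_ * ?_
        · apply Real.sqrt_le_sqrt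
          refine le_of_eq (Finset.sum_congr rfl fun i _ => ?_)
          by_cases h : 0 < μ i <;> simp [h]
        · rw [show (∑ i, c i ^ 2) = Real.sqrt ((∑ i, c i ^ 2) ^ 2) by
            rw [Real.sqrt_sq (by positivity)]]
          apply Real.sqrt_le_sqrt
          exact Finset.sum_sq_le_sq_sum_of_nonneg fun i _ => sq_nonneg _

lemma sPos_eq {V : Type*} [Fintype V] [DecidableEq V] (G : SimpleGraph V)
    [inst : DecidableRel G.Adj] :
    sPos G = ∑ i, if 0 < (adjHerm G).eigenvalues i then ((adjHerm G).eigenvalues i) ^ 2 else 0 := by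
  have h : (fun a b => Classical.propDecidable (G.Adj a b) : DecidableRel G.Adj) = inst :=
    Subsingleton.elim _ _
  subst h
  rfl

open Matrix in
lemma deg_sum_le_sqrt_sPos {V : Type*} [Fintype V] [DecidableEq V] (G : SimpleGraph V)
    [DecidableRel G.Adj] :
    (∑ v, (G.degree v : ℝ)) ≤ Real.sqrt (sPos G) * (Fintype.card V : ℝ) := by
  have h := quad_le_sqrt_aux (adjHerm G) (Function.const V (1 : ℝ))
  have hL : (Function.const V (1 : ℝ)) ⬝ᵥ (G.adjMatrix ℝ *ᵥ Function.const V (1 : ℝ))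
      = ∑ v, (G.degree v : ℝ) := by
    simp [dotProduct, adjMatrix_mulVec_const_apply]
  have hR : (Function.const V (1 : ℝ)) ⬝ᵥ (Function.const V (1 : ℝ))
      = (Fintype.card V : ℝ) := by
    simp [dotProduct]
  rw [hL, hR] at h
  rw [sPos_eq G]
  exact h

/-- `√(s⁺(G)) + √(s⁺(Ḡ)) ≥ n - 1`. -/
theorem sqrt_sPos_add_sqrt_sPos_compl_ge {n : ℕ} (G : SimpleGraph (Fin n)) :
    Real.sqrt (sPos G) + Real.sqrt (sPos Gᶜ) ≥ (n : ℝ) - 1 := by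
  rcases Nat.eq_zero_or_pos n with h0 | hn
  · subst h0
    have h1 := Real.sqrt_nonneg (sPos G)
    have h2 := Real.sqrt_nonneg (sPos Gᶜ)
    simp only [Nat.cast_zero, ge_iff_le]
    linarith
  classical
  have hG := deg_sum_le_sqrt_sPos G
  have hGc := deg_sum_le_sqrt_sPos Gᶜ
  rw [Fintype.card_fin] at hG hGc
  have hdeg : (∑ v, (G.degree v : ℝ)) + (∑ v : Fin n, (Gᶜ.degree v : ℝ))
      = (n : ℝ) * ((n : ℝ) - 1) := by
    rw [← Finset.sum_add_distrib]
    have hv : ∀ v : Fin n, (G.degree v : ℝ) + (Gᶜ.degree v : ℝ) = (n : ℝ) - 1 := by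
      intro v
      have h1 : Gᶜ.degree v = Fintype.card (Fin n) - 1 - G.degree v := G.degree_compl v
      have h2 : G.degree v < Fintype.card (Fin n) := G.degree_lt_card_verts v
      rw [Fintype.card_fin] at h1 h2
      have h3 : (G.degree v + Gᶜ.degree v : ℕ) = n - 1 := by omega
      have h4 : ((n - 1 : ℕ) : ℝ) = (n : ℝ) - 1 := by
        rw [Nat.cast_sub hn]; norm_num
      rw [← Nat.cast_add, h3, h4]
    rw [Finset.sum_congr rfl fun v _ => hv v, Finset.sum_const, Finset.card_univ,
      Fintype.card_fin, nsmul_eq_mul]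
  have hnpos : (0 : ℝ) < n := by exact_mod_cast hn
  have hsum := add_le_add hG hGc
  rw [hdeg] at hsum
  have key : ((n : ℝ) - 1) * n ≤ (Real.sqrt (sPos G) + Real.sqrt (sPos Gᶜ)) * n := by
    linarith
  exact (mul_le_mul_iff_of_pos_right hnpos).mp key
end

section
/- If G is a simple graph with m edges and chromatic number χ, then s⁺(G) ≤ 2m(χ − 1)/χ. -/
open Finset SimpleGraph

section AndoLinAux

open Matrix

variable {V : Type*} [Fintype V] [DecidableEq V]


lemma psd_trace_nonneg {S : Matrix V V ℝ} (hS : S.PosSemidef) : 0 ≤ S.trace := by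
  rw [Matrix.trace]
  refine Finset.sum_nonneg fun i _ => ?_
  have h := hS.dotProduct_mulVec_nonneg (Pi.single i 1)
  simpa [dotProduct, Matrix.mulVec, Pi.single_apply, Finset.sum_ite_eq,
    Matrix.diag] using h

open scoped MatrixOrder in
lemma psd_inner_nonneg {S T : Matrix V V ℝ} (hS : S.PosSemidef) (hT : T.PosSemidef) :
    0 ≤ ∑ u, ∑ v, S u v * T u v := by
  have hTsym : ∀ u v, T v u = T u v := by
    intro u v
    have h := congrFun (congrFun hT.1 u) v
    rw [Matrix.conjTranspose_apply, star_trivial] at h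
    exact h
  have key : 0 ≤ (S * T).trace := by
    have h1 : S * T = CFC.sqrt S * (CFC.sqrt S * T) := by rw [← mul_assoc, CFC.sqrt_mul_sqrt_self S hS.nonneg]
    rw [h1, Matrix.trace_mul_comm]
    have h2 : CFC.sqrt S * T * CFC.sqrt S = CFC.sqrt S * T * (CFC.sqrt S)ᴴ := by
      rw [(CFC.sqrt_nonneg S).posSemidef.1]
    have h3 : (CFC.sqrt S * T * (CFC.sqrt S)ᴴ).PosSemidef := hT.mul_mul_conjTranspose_same _
    rw [h2]
    exact psd_trace_nonneg h3
  calc (0:ℝ) ≤ (S * T).trace := key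
    _ = ∑ u, ∑ v, S u v * T u v := by
        rw [Matrix.trace]
        refine Finset.sum_congr rfl fun u _ => ?_
        rw [Matrix.diag_apply, Matrix.mul_apply]
        exact Finset.sum_congr rfl fun v _ => by rw [hTsym]

lemma core_ineq {k : ℕ} (B C : Matrix V V ℝ) (hB : B.PosSemidef) (hC : C.PosSemidef)
    (c : V → Fin k) (hsame : ∀ u v, c u = c v → B u v = C u v)
    (horth : ∑ u, ∑ v, B u v * C u v = 0) :
    ∑ u, ∑ v, (B u v) ^ 2 ≤ ((k : ℝ) - 1) * ∑ u, ∑ v, (C u v) ^ 2 := by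
  rcases isEmpty_or_nonempty V with hV | hV
  · simp [Finset.univ_eq_empty]
  have hk1 : 1 ≤ (k : ℝ) := by
    have := (c (Classical.arbitrary V)).pos
    exact_mod_cast this
  have hkpos : (0:ℝ) < k := by linarith
  set T : ℝ := ∑ u, ∑ v, if c u = c v then (B u v) ^ 2 else 0 with hTdef
  set X : ℝ := ∑ u, ∑ v, if c u = c v then 0 else (B u v) ^ 2 with hXdef
  set Y : ℝ := ∑ u, ∑ v, if c u = c v then 0 else (C u v) ^ 2 with hYdef
  set Z : ℝ := ∑ u, ∑ v, if c u = c v then 0 else B u v * C u v with hZdef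
  have hsplit : ∀ f : V → V → ℝ, ∑ u, ∑ v, f u v =
      (∑ u, ∑ v, if c u = c v then f u v else 0) +
      (∑ u, ∑ v, if c u = c v then 0 else f u v) := by
    intro f
    rw [← Finset.sum_add_distrib]
    refine Finset.sum_congr rfl fun u _ => ?_
    rw [← Finset.sum_add_distrib]
    refine Finset.sum_congr rfl fun v _ => ?_
    split <;> simp
  have hT0 : 0 ≤ T := by
    refine Finset.sum_nonneg fun u _ => Finset.sum_nonneg fun v _ => ?_
    split <;> positivity
  have hX0 : 0 ≤ X := by
    refine Finset.sum_nonneg fun u _ => Finset.sum_nonneg fun v _ => ?_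
    split <;> positivity
  have hY0 : 0 ≤ Y := by
    refine Finset.sum_nonneg fun u _ => Finset.sum_nonneg fun v _ => ?_
    split <;> positivity
  have hBsplit : ∑ u, ∑ v, (B u v) ^ 2 = T + X := hsplit _
  have hCsplit : ∑ u, ∑ v, (C u v) ^ 2 =
      (∑ u, ∑ v, if c u = c v then (C u v) ^ 2 else 0) + Y := hsplit _
  have hTC : (∑ u, ∑ v, if c u = c v then (C u v) ^ 2 else 0) = T := by
    refine Finset.sum_congr rfl fun u _ => Finset.sum_congr rfl fun v _ => ?_
    split
    · next h => rw [hsame u v h]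
    · rfl
  have hZT : Z = -T := by
    have h1 : ∑ u, ∑ v, B u v * C u v =
        (∑ u, ∑ v, if c u = c v then B u v * C u v else 0) + Z := hsplit _
    have h2 : (∑ u, ∑ v, if c u = c v then B u v * C u v else 0) = T := by
      refine Finset.sum_congr rfl fun u _ => Finset.sum_congr rfl fun v _ => ?_
      split
      · next h => rw [hsame u v h, ← sq]
      · rfl
    rw [horth, h2] at h1
    linarith
  -- Key inequality : T + X ≤ k * T
  have hkey : T + X ≤ (k : ℝ) * T := by
    set s : ℝ := Real.sqrt k with hs
    have hs2 : s * s = k := Real.mul_self_sqrt (le_of_lt hkpos)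
    have hsne : s ≠ 0 := by
      intro h
      rw [h, mul_comm, mul_zero] at hs2
      linarith
    have hst : s * (1 / s) = 1 := by field_simp
    have htt : (1 / s) * (1 / s) = 1 / (k : ℝ) := by
      rw [div_mul_div_comm, one_mul, hs2]
    set w : Fin k → V → ℝ := fun d u => s * (if c u = d then 1 else 0) - 1 / s with hw
    have hQ : ∀ d : Fin k, 0 ≤ ∑ u, ∑ v, (B u v) ^ 2 * (w d u * w d v) := by
      intro d
      have hM : (Matrix.diagonal (w d) * B * (Matrix.diagonal (w d))ᴴ).PosSemidef :=
        hB.mul_mul_conjTranspose_same _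
      have h0 := psd_inner_nonneg hB hM
      calc (0:ℝ) ≤ ∑ u, ∑ v, B u v * ((Matrix.diagonal (w d) * B * (Matrix.diagonal (w d))ᴴ) u v) := h0
        _ = ∑ u, ∑ v, (B u v) ^ 2 * (w d u * w d v) := by
            refine Finset.sum_congr rfl fun u _ => Finset.sum_congr rfl fun v _ => ?_
            rw [Matrix.diagonal_conjTranspose]
            have : star (w d) = w d := by funext z; exact star_trivial _
            rw [this, Matrix.mul_diagonal, Matrix.diagonal_mul]
            ring
    have hsum_w : ∀ u v : V, (∑ d : Fin k, w d u * w d v) =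
        (k : ℝ) * (if c u = c v then 1 else 0) - 1 := by
      intro u v
      have hterm : ∀ d : Fin k, w d u * w d v =
          (k : ℝ) * ((if c u = d then (1:ℝ) else 0) * (if c v = d then (1:ℝ) else 0))
          - (if c u = d then (1:ℝ) else 0) - (if c v = d then (1:ℝ) else 0) + 1 / k := by
        intro d
        simp only [hw]
        set a : ℝ := if c u = d then (1:ℝ) else 0
        set b : ℝ := if c v = d then (1:ℝ) else 0
        linear_combination (a * b) * hs2 - a * hst - b * hst + htt
      rw [Finset.sum_congr rfl fun d _ => hterm d]
      have e1 : ∑ d : Fin k, ((if c u = d then (1:ℝ) else 0) * (if c v = d then (1:ℝ) else 0))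
          = (if c u = c v then 1 else 0) := by
        rw [Finset.sum_eq_single (c u)]
        · rw [if_pos rfl, one_mul]
          by_cases h : c u = c v
          · rw [if_pos h.symm, if_pos h]
          · rw [if_neg (fun hh => h hh.symm), if_neg h]
        · intro d _ hd
          rw [if_neg (fun hh => hd hh.symm), zero_mul]
        · intro h
          exact absurd (Finset.mem_univ _) h
      have e2 : ∑ d : Fin k, (if c u = d then (1:ℝ) else 0) = 1 := by
        simp [Finset.sum_ite_eq]
      have e3 : ∑ d : Fin k, (if c v = d then (1:ℝ) else 0) = 1 := by
        simp [Finset.sum_ite_eq]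
      simp only [Finset.sum_add_distrib, Finset.sum_sub_distrib, ← Finset.mul_sum, e1, e2, e3,
        Finset.sum_const, Finset.card_univ, Fintype.card_fin, nsmul_eq_mul]
      rw [mul_one_div, div_self (ne_of_gt hkpos)]
      ring
    have htot : 0 ≤ ∑ d : Fin k, ∑ u, ∑ v, (B u v) ^ 2 * (w d u * w d v) :=
      Finset.sum_nonneg fun d _ => hQ d
    have hswap : ∑ d : Fin k, ∑ u, ∑ v, (B u v) ^ 2 * (w d u * w d v)
        = (k : ℝ) * T - (T + X) := by
      rw [Finset.sum_comm]
      have : ∀ u : V, ∑ d : Fin k, ∑ v, (B u v) ^ 2 * (w d u * w d v)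
          = ∑ v, ((k:ℝ) * (if c u = c v then (B u v)^2 else 0) - (B u v)^2) := by
        intro u
        rw [Finset.sum_comm]
        refine Finset.sum_congr rfl fun v _ => ?_
        rw [← Finset.mul_sum, hsum_w u v]
        split <;> ring
      rw [Finset.sum_congr rfl fun u _ => this u]
      simp only [Finset.sum_sub_distrib, ← Finset.mul_sum]
      rw [← hTdef, ← hBsplit]
    rw [hswap] at htot
    linarith
  -- Cauchy–Schwarz : Z ^ 2 ≤ X * Y
  have hcs : Z ^ 2 ≤ X * Y := by
    have h := Finset.sum_mul_sq_le_sq_mul_sq Finset.univ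
      (fun p : V × V => if c p.1 = c p.2 then 0 else B p.1 p.2)
      (fun p : V × V => if c p.1 = c p.2 then 0 else C p.1 p.2)
    have eZ : ∑ p : V × V, (fun p : V × V => if c p.1 = c p.2 then 0 else B p.1 p.2) p *
        (fun p : V × V => if c p.1 = c p.2 then 0 else C p.1 p.2) p = Z := by
      rw [hZdef, ← Fintype.sum_prod_type']
      refine Finset.sum_congr rfl fun p _ => ?_
      rcases eq_or_ne (c p.1) (c p.2) with h | h <;> simp [h]
    have eX : ∑ p : V × V, ((fun p : V × V => if c p.1 = c p.2 then 0 else B p.1 p.2) p) ^ 2 = X := by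
      rw [hXdef, ← Fintype.sum_prod_type']
      refine Finset.sum_congr rfl fun p _ => ?_
      rcases eq_or_ne (c p.1) (c p.2) with h | h <;> simp [h]
    have eY : ∑ p : V × V, ((fun p : V × V => if c p.1 = c p.2 then 0 else C p.1 p.2) p) ^ 2 = Y := by
      rw [hYdef, ← Fintype.sum_prod_type']
      refine Finset.sum_congr rfl fun p _ => ?_
      rcases eq_or_ne (c p.1) (c p.2) with h | h <;> simp [h]
    rw [eZ, eX, eY] at h
    exact h
  have hTZ : T ^ 2 ≤ X * Y := by
    have : T ^ 2 = Z ^ 2 := by rw [hZT]; ring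
    linarith
  rw [hBsplit, hCsplit, hTC]
  rcases eq_or_lt_of_le hT0 with hT | hT
  · have hXz : X ≤ 0 := by nlinarith
    nlinarith
  · have h5 : T ≤ ((k:ℝ) - 1) * Y := by nlinarith
    nlinarith


theorem main_aux {V : Type*} [Fintype V] [DecidableEq V] (G : SimpleGraph V)
    [DecidableRel G.Adj] (χ : ℕ) (hχpos : 0 < χ) (m : ℕ) (hm : ∑ u, G.degree u = 2 * m)
    (hcol : G.Colorable χ) :
    (∑ i, if 0 < (adjHerm G).eigenvalues i then ((adjHerm G).eigenvalues i) ^ 2 else 0)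
      ≤ 2 * (m : ℝ) * ((χ : ℝ) - 1) / (χ : ℝ) := by
  obtain ⟨co⟩ := hcol
  have hA := adjHerm G
  set A : Matrix V V ℝ := G.adjMatrix ℝ with hAdef
  set E : V → ℝ := hA.eigenvalues with hEdef
  set W : Matrix V V ℝ := (Matrix.IsHermitian.eigenvectorUnitary hA : Matrix V V ℝ) with hWdef
  have hWW : star W * W = 1 := Matrix.mem_unitaryGroup_iff'.mp (Matrix.IsHermitian.eigenvectorUnitary hA).2
  have hconj : ∀ d e : V → ℝ, (W * Matrix.diagonal d * star W) * (W * Matrix.diagonal e * star W)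
      = W * Matrix.diagonal (fun i => d i * e i) * star W := by
    intro d e
    calc (W * Matrix.diagonal d * star W) * (W * Matrix.diagonal e * star W)
        = W * Matrix.diagonal d * ((star W * W) * (Matrix.diagonal e * star W)) := by
          simp only [Matrix.mul_assoc]
      _ = W * Matrix.diagonal (fun i => d i * e i) * star W := by
          rw [hWW, one_mul,
            show W * Matrix.diagonal d * (Matrix.diagonal e * star W)
              = W * (Matrix.diagonal d * Matrix.diagonal e) * star W by simp only [Matrix.mul_assoc],
            Matrix.diagonal_mul_diagonal]
  have htr : ∀ d : V → ℝ, (W * Matrix.diagonal d * star W).trace = ∑ i, d i := by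
    intro d
    rw [Matrix.trace_mul_comm, ← Matrix.mul_assoc, hWW, one_mul, Matrix.trace_diagonal]
  set dp : V → ℝ := fun i => max (E i) 0 with hdp
  set dm : V → ℝ := fun i => max (-E i) 0 with hdm
  set B : Matrix V V ℝ := W * Matrix.diagonal dp * star W with hBdef
  set C : Matrix V V ℝ := W * Matrix.diagonal dm * star W with hCdef
  have hstarW : star W = Wᴴ := rfl
  have hBpsd : B.PosSemidef := by
    rw [hBdef, hstarW]
    exact Matrix.PosSemidef.mul_mul_conjTranspose_same
      (Matrix.posSemidef_diagonal_iff.mpr fun i => le_max_right _ _) W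
  have hCpsd : C.PosSemidef := by
    rw [hCdef, hstarW]
    exact Matrix.PosSemidef.mul_mul_conjTranspose_same
      (Matrix.posSemidef_diagonal_iff.mpr fun i => le_max_right _ _) W
  have hspec : A = W * Matrix.diagonal E * star W := by
    have h := hA.spectral_theorem
    rwa [RCLike.ofReal_real_eq_id, Function.id_comp] at h
  have hde : (fun i => dp i - dm i) = E := by
    funext i
    simp only [hdp, hdm]
    rcases le_total (E i) 0 with h | h
    · rw [max_eq_right h, max_eq_left (by linarith)]; ring
    · rw [max_eq_left h, max_eq_right (by linarith)]; ring
  have hdiagsub : Matrix.diagonal dp - Matrix.diagonal dm = Matrix.diagonal E := by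
    rw [Matrix.diagonal_sub]
    exact congrArg Matrix.diagonal hde
  have hsub : B - C = A := by
    rw [hBdef, hCdef, hspec, ← Matrix.sub_mul, ← Matrix.mul_sub, hdiagsub]
  have hBC : B * C = 0 := by
    rw [hBdef, hCdef, hconj]
    have : (fun i => dp i * dm i) = fun _ => (0:ℝ) := by
      funext i
      simp only [hdp, hdm]
      rcases le_total (E i) 0 with h | h
      · rw [max_eq_right h, zero_mul]
      · rw [max_eq_right (by linarith : -E i ≤ 0), mul_zero]
    rw [this, show Matrix.diagonal (fun _ : V => (0:ℝ)) = 0 from Matrix.diagonal_zero,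
      Matrix.mul_zero, Matrix.zero_mul]
  have symm_of : ∀ (M : Matrix V V ℝ), M.IsHermitian → ∀ u v, M v u = M u v := by
    intro M hM u v
    have h := congrFun (congrFun hM u) v
    rwa [Matrix.conjTranspose_apply, star_trivial] at h
  have hCsym := symm_of C hCpsd.1
  have horth : ∑ u, ∑ v, B u v * C u v = 0 := by
    calc ∑ u, ∑ v, B u v * C u v = ∑ u, ∑ v, B u v * C v u :=
          Finset.sum_congr rfl fun u _ => Finset.sum_congr rfl fun v _ => by rw [hCsym]
      _ = (B * C).trace := by
          rw [Matrix.trace]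
          exact (Finset.sum_congr rfl fun u _ => by rw [Matrix.diag_apply, Matrix.mul_apply]).symm
      _ = 0 := by rw [hBC, Matrix.trace_zero]
  have hsame : ∀ u v, co u = co v → B u v = C u v := by
    intro u v h
    have h0 : A u v = 0 := by
      by_cases hadj : G.Adj u v
      · exact absurd h (co.valid hadj)
      · simp [hAdef, hadj]
    have h1 := congrFun (congrFun hsub u) v
    rw [Matrix.sub_apply, h0] at h1
    linarith
  have hcore := core_ineq B C hBpsd hCpsd co hsame horth
  have hsum2 : ∀ (M : Matrix V V ℝ) (d : V → ℝ), (∀ u v, M v u = M u v) →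
      M = W * Matrix.diagonal d * star W → ∑ u, ∑ v, (M u v) ^ 2 = ∑ i, (d i) ^ 2 := by
    intro M d hMsym hMd
    calc ∑ u, ∑ v, (M u v) ^ 2 = (M * M).trace := by
          rw [Matrix.trace]
          refine Finset.sum_congr rfl fun u _ => ?_
          rw [Matrix.diag_apply, Matrix.mul_apply]
          exact Finset.sum_congr rfl fun v _ => by rw [sq, hMsym]
      _ = ∑ i, (d i) ^ 2 := by
          rw [hMd, hconj, htr]
          exact Finset.sum_congr rfl fun i _ => (sq (d i)).symm
  have hB2 := hsum2 B dp (symm_of B hBpsd.1) hBdef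
  have hC2 := hsum2 C dm (symm_of C hCpsd.1) hCdef
  have hA2 := hsum2 A E (symm_of A hA) hspec
  have hA2' : ∑ u, ∑ v, (A u v) ^ 2 = 2 * (m : ℝ) := by
    have h1 : ∀ u v, (A u v) ^ 2 = if G.Adj u v then (1:ℝ) else 0 := by
      intro u v
      simp only [hAdef, SimpleGraph.adjMatrix_apply]
      split <;> norm_num
    calc ∑ u, ∑ v, (A u v) ^ 2 = ∑ u, (G.degree u : ℝ) := by
          refine Finset.sum_congr rfl fun u _ => ?_
          rw [Finset.sum_congr rfl fun v _ => h1 u v, Finset.sum_boole, SimpleGraph.degree]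
          congr 1
          rw [SimpleGraph.neighborFinset_eq_filter]
      _ = 2 * (m : ℝ) := by
          rw [← Nat.cast_sum, hm]
          push_cast
          ring
  have hptw : ∀ i, (dp i) ^ 2 + (dm i) ^ 2 = (E i) ^ 2 := by
    intro i
    simp only [hdp, hdm]
    rcases le_total (E i) 0 with h | h
    · rw [max_eq_right h, max_eq_left (by linarith)]; ring
    · rw [max_eq_left h, max_eq_right (by linarith)]; ring
  have h2m : (∑ i, (dp i) ^ 2) + (∑ i, (dm i) ^ 2) = 2 * (m : ℝ) := by
    rw [← Finset.sum_add_distrib, Finset.sum_congr rfl fun i _ => hptw i, ← hA2, hA2']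
  have hgoal : (∑ i, if 0 < E i then (E i) ^ 2 else 0) = ∑ i, (dp i) ^ 2 := by
    refine Finset.sum_congr rfl fun i _ => ?_
    simp only [hdp]
    split
    · next h => rw [max_eq_left h.le]
    · next h => rw [max_eq_right (not_lt.mp h)]; norm_num
  have hsp0 : 0 ≤ ∑ i, (dp i) ^ 2 := Finset.sum_nonneg fun i _ => sq_nonneg _
  have hsm0 : 0 ≤ ∑ i, (dm i) ^ 2 := Finset.sum_nonneg fun i _ => sq_nonneg _
  have hχR : (0:ℝ) < χ := by exact_mod_cast hχpos
  rw [hgoal, le_div_iff₀ hχR]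
  rw [hB2, hC2] at hcore
  nlinarith [hcore, h2m, hsp0, hsm0]

end AndoLinAux

/-- Ando–Lin consequence: `s⁺(G) ≤ 2m(χ - 1)/χ`. -/
theorem sPos_le_of_chromaticNumber {n : ℕ} (G : SimpleGraph (Fin n)) (χ : ℕ)
    (hχ : G.chromaticNumber = χ) :
    sPos G ≤ 2 * (numEdges G : ℝ) * ((χ : ℝ) - 1) / (χ : ℝ) := by
  classical
  rcases Nat.eq_zero_or_pos χ with hz | hpos
  · subst hz
    have hemp : IsEmpty (Fin n) :=
      G.isEmpty_of_chromaticNumber_eq_zero (by simpa using hχ)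
    have h0 : sPos G = 0 := by
      simp [sPos, Finset.univ_eq_empty]
    rw [h0]
    norm_num
  · have hcol : G.Colorable χ := SimpleGraph.chromaticNumber_le_iff_colorable.mp (le_of_eq hχ)
    have hm : ∑ u, G.degree u = 2 * numEdges G := by
      unfold numEdges
      exact SimpleGraph.sum_degrees_eq_twice_card_edges G
    exact main_aux G χ hpos (numEdges G) hm hcol
end

section
/- For any graph G with m edges, the spectral radius μ₁ of the adjacency matrix satisfies μ₁ ≤ (√(8m+1) − 1)/2. -/
open Finset SimpleGraph

/-- Auxiliary: any eigenvalue `lam` of the adjacency matrix satisfies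
`lam ^ 2 + lam ≤ ∑ degrees`. -/
lemma eig_quad_le {n : ℕ} (G : SimpleGraph (Fin n)) [DecidableRel G.Adj]
    (lam : ℝ) (v : Fin n → ℝ) (hv : ∑ j, v j * v j = 1)
    (hev : (G.adjMatrix ℝ).mulVec v = lam • v) :
    lam ^ 2 + lam ≤ ∑ u : Fin n, (G.degree u : ℝ) := by
  set A := G.adjMatrix ℝ with hA
  have hAnn : ∀ j k, 0 ≤ A j k := by
    intro j k
    rw [hA]; by_cases h : G.Adj j k <;> simp [SimpleGraph.adjMatrix_apply, h]
  have hdegrow : ∀ j : Fin n, ∑ k, A j k = (G.degree j : ℝ) := by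
    intro j
    rw [hA]
    simp [SimpleGraph.adjMatrix_apply, Finset.sum_boole, SimpleGraph.degree,
      SimpleGraph.neighborFinset_eq_filter]
  set B := A * A + A with hB
  set D := ∑ u : Fin n, (G.degree u : ℝ) with hD
  have hdegnn : ∀ u : Fin n, (0:ℝ) ≤ (G.degree u : ℝ) := fun u => Nat.cast_nonneg _
  have hBnn : ∀ j k, 0 ≤ B j k := by
    intro j k
    have h1 : (0:ℝ) ≤ (A * A) j k := by
      rw [Matrix.mul_apply]
      exact Finset.sum_nonneg fun u _ => mul_nonneg (hAnn j u) (hAnn u k)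
    have h2 := hAnn j k
    rw [hB]; simp only [Matrix.add_apply]; linarith
  have hAsymm : A.IsSymm := SimpleGraph.isSymm_adjMatrix G
  have hBsymm : ∀ j k, B k j = B j k := by
    have : B.IsSymm := by
      rw [hB]
      refine Matrix.IsSymm.add ?_ hAsymm
      rw [Matrix.IsSymm, Matrix.transpose_mul, hAsymm.eq]
    exact fun j k => this.apply j k
  -- row sums of B are at most D
  have hrow : ∀ j : Fin n, ∑ k, B j k ≤ D := by
    intro j
    have hsq : ∑ k, (A * A) j k = ∑ u ∈ G.neighborFinset j, (G.degree u : ℝ) := by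
      simp only [hA, SimpleGraph.adjMatrix_mul_apply]
      rw [Finset.sum_comm]
      exact Finset.sum_congr rfl fun u _ => hdegrow u
    have hsub : G.neighborFinset j ⊆ Finset.univ.erase j := by
      intro u hu
      rw [SimpleGraph.mem_neighborFinset] at hu
      exact Finset.mem_erase.2 ⟨hu.ne', Finset.mem_univ u⟩
    have h1 : ∑ u ∈ G.neighborFinset j, (G.degree u : ℝ)
        ≤ ∑ u ∈ Finset.univ.erase j, (G.degree u : ℝ) :=
      Finset.sum_le_sum_of_subset_of_nonneg hsub fun u _ _ => hdegnn u
    have h2 : ∑ u ∈ Finset.univ.erase j, (G.degree u : ℝ) = D - (G.degree j : ℝ) := by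
      rw [hD, Finset.sum_erase_eq_sub (Finset.mem_univ j)]
    have h3 : ∑ k, B j k = ∑ k, (A * A) j k + (G.degree j : ℝ) := by
      rw [hB]; simp only [Matrix.add_apply, Finset.sum_add_distrib, hdegrow j]
    rw [h3, hsq]; linarith
  -- the quadratic form identity
  have hBv : B.mulVec v = (lam ^ 2 + lam) • v := by
    rw [hB, Matrix.add_mulVec, ← Matrix.mulVec_mulVec, hev, Matrix.mulVec_smul, hev]
    ext j
    simp [Pi.smul_apply, smul_eq_mul]
    ring
  have hquad : lam ^ 2 + lam = ∑ j, ∑ k, B j k * (v j * v k) := by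
    have h1 : ∑ j, v j * B.mulVec v j = lam ^ 2 + lam := by
      rw [hBv]
      have : ∑ j, v j * ((lam ^ 2 + lam) • v) j
          = (lam ^ 2 + lam) * ∑ j, v j * v j := by
        rw [Finset.mul_sum]
        exact Finset.sum_congr rfl fun j _ => by simp [smul_eq_mul]; ring
      rw [this, hv, mul_one]
    rw [← h1]
    refine Finset.sum_congr rfl fun j _ => ?_
    simp only [Matrix.mulVec, dotProduct]
    rw [Finset.mul_sum]
    exact Finset.sum_congr rfl fun k _ => by ring
  -- bound the quadratic form
  have hbound : ∑ j, ∑ k, B j k * (v j * v k)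
      ≤ ∑ j, ∑ k, B j k * ((v j ^ 2 + v k ^ 2) / 2) := by
    refine Finset.sum_le_sum fun j _ => Finset.sum_le_sum fun k _ => ?_
    refine mul_le_mul_of_nonneg_left ?_ (hBnn j k)
    nlinarith [sq_nonneg (v j - v k)]
  have hsplit : ∑ j, ∑ k, B j k * ((v j ^ 2 + v k ^ 2) / 2)
      = ∑ j, (∑ k, B j k) * v j ^ 2 := by
    have e1 : ∑ j, ∑ k, B j k * ((v j ^ 2 + v k ^ 2) / 2)
        = (∑ j, ∑ k, B j k * v j ^ 2) / 2 + (∑ j, ∑ k, B j k * v k ^ 2) / 2 := by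
      rw [Finset.sum_div, Finset.sum_div, ← Finset.sum_add_distrib]
      refine Finset.sum_congr rfl fun j _ => ?_
      rw [Finset.sum_div, Finset.sum_div, ← Finset.sum_add_distrib]
      exact Finset.sum_congr rfl fun k _ => by ring
    have e2 : ∑ j, ∑ k, B j k * v k ^ 2 = ∑ j, ∑ k, B j k * v j ^ 2 := by
      rw [Finset.sum_comm]
      refine Finset.sum_congr rfl fun j _ => Finset.sum_congr rfl fun k _ => ?_
      rw [hBsymm j k]
    have e3 : ∀ j, ∑ k, B j k * v j ^ 2 = (∑ k, B j k) * v j ^ 2 := fun j => by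
      rw [Finset.sum_mul]
    rw [e1, e2]
    rw [Finset.sum_congr rfl fun j _ => e3 j]
    ring
  have hfinal : ∑ j, (∑ k, B j k) * v j ^ 2 ≤ D := by
    have h1 : ∑ j, (∑ k, B j k) * v j ^ 2 ≤ ∑ j, D * v j ^ 2 :=
      Finset.sum_le_sum fun j _ => mul_le_mul_of_nonneg_right (hrow j) (sq_nonneg _)
    have h2 : ∑ j, D * v j ^ 2 = D := by
      rw [← Finset.mul_sum]
      have : ∑ j, v j ^ 2 = 1 := by
        rw [← hv]; exact Finset.sum_congr rfl fun j _ => sq (v j) ▸ by ring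
      rw [this, mul_one]
    linarith
  calc lam ^ 2 + lam = ∑ j, ∑ k, B j k * (v j * v k) := hquad
    _ ≤ ∑ j, ∑ k, B j k * ((v j ^ 2 + v k ^ 2) / 2) := hbound
    _ = ∑ j, (∑ k, B j k) * v j ^ 2 := hsplit
    _ ≤ D := hfinal

/-- Stanley's bound: `μ₁ ≤ (√(8m+1) - 1)/2`. -/
theorem specRad_le_stanley {n : ℕ} (G : SimpleGraph (Fin n)) :
    specRad G ≤ (Real.sqrt (8 * (numEdges G : ℝ) + 1) - 1) / 2 := by
  classical
  have hsq1 : (1:ℝ) ≤ Real.sqrt (8 * (numEdges G : ℝ) + 1) := by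
    have h0 : (0:ℝ) ≤ (numEdges G : ℝ) := Nat.cast_nonneg _
    have := Real.sqrt_le_sqrt (show (1:ℝ) ≤ 8 * (numEdges G : ℝ) + 1 by linarith)
    simpa using this
  have hrhs : (0:ℝ) ≤ (Real.sqrt (8 * (numEdges G : ℝ) + 1) - 1) / 2 := by linarith
  rcases Nat.eq_zero_or_pos n with hn | hn
  · subst hn
    rw [specRad, Real.iSup_of_isEmpty]
    exact hrhs
  · haveI : Nonempty (Fin n) := ⟨⟨0, hn⟩⟩
    rw [specRad]
    refine ciSup_le fun i => ?_
    by_cases hneg : adjEig G i ≤ 0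
    · linarith
    push_neg at hneg
    -- degree sum formula
    have hdeg : ∑ u : Fin n, (G.degree u : ℝ) = 2 * (numEdges G : ℝ) := by
      rw [numEdges]
      rw [← Nat.cast_sum]
      rw [G.sum_degrees_eq_twice_card_edges]
      push_cast
      ring
    -- eigenvector facts
    set hH := adjHerm G with hHdef
    have hev := hH.mulVec_eigenvectorBasis i
    have hunit : ∑ j, (hH.eigenvectorBasis i) j * (hH.eigenvectorBasis i) j = 1 := by
      have horth := hH.eigenvectorBasis.orthonormal
      rw [orthonormal_iff_ite] at horth
      have h1 : (inner ℝ (hH.eigenvectorBasis i) (hH.eigenvectorBasis i) : ℝ) = 1 := by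
        rw [horth i i, if_pos rfl]
      rw [PiLp.inner_apply] at h1
      simpa [RCLike.inner_apply, ← sq] using h1
    have key := eig_quad_le G (hH.eigenvalues i) (hH.eigenvectorBasis i) hunit hev
    rw [hdeg] at key
    have hlam : adjEig G i = hH.eigenvalues i := rfl
    rw [hlam]
    set lam := hH.eigenvalues i with hlamdef
    have h8 : (2 * lam + 1) ^ 2 ≤ 8 * (numEdges G : ℝ) + 1 := by nlinarith
    have h2l : 2 * lam + 1 ≤ Real.sqrt (8 * (numEdges G : ℝ) + 1) := by
      have h0 : (0:ℝ) ≤ 2 * lam + 1 := by linarith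
      calc 2 * lam + 1 = Real.sqrt ((2 * lam + 1) ^ 2) := (Real.sqrt_sq h0).symm
        _ ≤ _ := Real.sqrt_le_sqrt h8
    linarith
end

section
/- For any connected graph G with m edges and spectral radius μ, the Randić index satisfies R(G) ≥ m/μ. -/
open Finset SimpleGraph

open Matrix in
open scoped InnerProductSpace in
private lemma rayleigh_upper {m : Type*} [Fintype m] [DecidableEq m] [Nonempty m]
    {A : Matrix m m ℝ} (hA : A.IsHermitian) (x : m → ℝ) :
    x ⬝ᵥ (A *ᵥ x) ≤ (⨆ i, hA.eigenvalues i) * (x ⬝ᵥ x) := by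
  have hdot : ∀ u v : EuclideanSpace ℝ m, ⟪u, v⟫_ℝ = (u : m → ℝ) ⬝ᵥ (v : m → ℝ) := by
    intro u v; rw [PiLp.inner_apply]; simp [dotProduct, mul_comm]
  set B := hA.eigenvectorBasis with hB
  set sx : EuclideanSpace ℝ m := (WithLp.equiv 2 (m → ℝ)).symm x with hsx
  set sAx : EuclideanSpace ℝ m := (WithLp.equiv 2 (m → ℝ)).symm (A *ᵥ x) with hsAx
  set c : m → ℝ := fun i => (B i : m → ℝ) ⬝ᵥ x with hc
  have hinner : ∀ i, ⟪sx, B i⟫_ℝ = c i := by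
    intro i; rw [real_inner_comm, hdot]; rfl
  have hinner' : ∀ i, ⟪B i, sx⟫_ℝ = c i := by
    intro i; rw [hdot]; rfl
  have key2 : x ⬝ᵥ x = ∑ i, c i ^ 2 := by
    have h := B.sum_inner_mul_inner sx sx
    simp only [hinner, hinner', ← sq] at h
    exact (h.trans (hdot _ _)).symm
  have hterm : ∀ i, ⟪B i, sAx⟫_ℝ = hA.eigenvalues i * c i := by
    intro i
    have h2 : A *ᵥ (B i : m → ℝ) = hA.eigenvalues i • (B i : m → ℝ) :=
      hA.mulVec_eigenvectorBasis i
    have hsym : ⟪B i, sAx⟫_ℝ = (A *ᵥ (B i : m → ℝ)) ⬝ᵥ x := by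
      rw [hdot]
      show (B i : m → ℝ) ⬝ᵥ (A *ᵥ x) = _
      rw [Matrix.dotProduct_mulVec, ← Matrix.mulVec_transpose,
        ← Matrix.conjTranspose_eq_transpose_of_trivial, hA.eq]
    rw [hsym, h2, smul_dotProduct, smul_eq_mul]
  have key1 : x ⬝ᵥ (A *ᵥ x) = ∑ i, hA.eigenvalues i * c i ^ 2 := by
    have h := B.sum_inner_mul_inner sx sAx
    simp only [hinner, hterm] at h
    refine ((h.trans (hdot _ _)).symm).trans (Finset.sum_congr rfl fun i _ => by ring)
  rw [key1, key2, Finset.mul_sum]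
  refine Finset.sum_le_sum fun i _ => ?_
  have : hA.eigenvalues i ≤ ⨆ j, hA.eigenvalues j :=
    le_ciSup (Set.Finite.bddAbove (Set.finite_range _)) i
  exact mul_le_mul_of_nonneg_right this (sq_nonneg _)

open Matrix in
/-- Favaron–Mahéo–Saclé: for connected `G`, `R(G) ≥ m/μ`. -/
theorem randic_ge_edges_div_specRad {n : ℕ} (G : SimpleGraph (Fin n))
    (hG : G.Connected) : randic G ≥ (numEdges G : ℝ) / specRad G := by
  classical
  have hR0 : 0 ≤ randic G := by
    unfold randic
    refine mul_nonneg (by norm_num) (Finset.sum_nonneg fun i _ =>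
      Finset.sum_nonneg fun j _ => ?_)
    split
    · positivity
    · exact le_rfl
  rcases Nat.eq_zero_or_pos (numEdges G) with h0 | hmpos
  · rw [h0]; simpa using hR0
  have hne : Nonempty (Fin n) := hG.nonempty
  set d : Fin n → ℝ := fun i => (G.degree i : ℝ) with hd
  have hd0 : ∀ i, (0:ℝ) ≤ d i := fun i => Nat.cast_nonneg _
  have hdpos : ∀ {i j : Fin n}, G.Adj i j → 0 < d i := by
    intro i j h
    have : 0 < G.degree i := (G.degree_pos_iff_exists_adj i).mpr ⟨j, h⟩
    show (0:ℝ) < (G.degree i : ℝ)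
    exact_mod_cast this
  set x : Fin n → ℝ := fun i => Real.sqrt (d i) with hx
  -- handshake
  have hhs : ∑ i, d i = 2 * (numEdges G : ℝ) := by
    unfold numEdges
    rw [hd]
    rw [← Nat.cast_sum, G.sum_degrees_eq_twice_card_edges]
    push_cast
    ring
  have hxx : x ⬝ᵥ x = 2 * (numEdges G : ℝ) := by
    rw [← hhs]
    exact Finset.sum_congr rfl fun i _ => Real.mul_self_sqrt (hd0 i)
  -- quadratic form
  have hS : x ⬝ᵥ ((G.adjMatrix ℝ) *ᵥ x)
      = ∑ i, ∑ j, (if G.Adj i j then Real.sqrt (d i * d j) else 0) := by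
    unfold dotProduct
    refine Finset.sum_congr rfl fun i _ => ?_
    rw [G.adjMatrix_mulVec_apply, neighborFinset_eq_filter, Finset.sum_filter,
      Finset.mul_sum]
    refine Finset.sum_congr rfl fun j _ => ?_
    by_cases h : G.Adj i j
    · simp [h, hx, Real.sqrt_mul (hd0 i)]
    · simp [h]
  -- Rayleigh
  have hray := rayleigh_upper (adjHerm G) x
  rw [hS, hxx] at hray
  have hrayleigh : ∑ i, ∑ j, (if G.Adj i j then Real.sqrt (d i * d j) else 0)
      ≤ specRad G * (2 * (numEdges G : ℝ)) := hray
  -- Cauchy–Schwarz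
  have hcs := Finset.sum_sq_le_sum_mul_sum_of_sq_eq_mul (Finset.univ : Finset (Fin n × Fin n))
    (r := fun p => if G.Adj p.1 p.2 then (1:ℝ) else 0)
    (f := fun p => if G.Adj p.1 p.2 then 1 / Real.sqrt (d p.1 * d p.2) else 0)
    (g := fun p => if G.Adj p.1 p.2 then Real.sqrt (d p.1 * d p.2) else 0)
    (fun p _ => by split <;> positivity)
    (fun p _ => by split <;> positivity)
    (fun p _ => by
      by_cases h : G.Adj p.1 p.2
      · have h1 : 0 < d p.1 := hdpos h
        have h2 : 0 < d p.2 := hdpos h.symm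
        have : Real.sqrt (d p.1 * d p.2) ≠ 0 := by positivity
        simp [h, this]
      · simp [h])
  -- rewrite product sums as double sums
  rw [← Finset.univ_product_univ] at hcs
  rw [Finset.sum_product (f := fun p => if G.Adj p.1 p.2 then (1:ℝ) else 0),
    Finset.sum_product (f := fun p => if G.Adj p.1 p.2 then 1 / Real.sqrt (d p.1 * d p.2) else 0),
    Finset.sum_product (f := fun p => if G.Adj p.1 p.2 then Real.sqrt (d p.1 * d p.2) else 0)]
    at hcs
  -- count: double sum of indicators = 2m
  have hcount : ∑ i, ∑ j, (if G.Adj i j then (1:ℝ) else 0) = 2 * (numEdges G : ℝ) := by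
    have : ∀ i : Fin n, ∑ j, (if G.Adj i j then (1:ℝ) else 0) = d i := by
      intro i
      rw [Finset.sum_boole, hd]
      norm_cast
      simp [SimpleGraph.degree, neighborFinset_eq_filter]
    rw [← hhs]
    exact Finset.sum_congr rfl fun i _ => this i
  have hf : ∑ i, ∑ j, (if G.Adj i j then 1 / Real.sqrt (d i * d j) else 0) = 2 * randic G := by
    unfold randic
    rw [hd]
    ring
  rw [hcount, hf] at hcs
  have hm : (0:ℝ) < (numEdges G : ℝ) := by exact_mod_cast hmpos
  have h1 : (2 * (numEdges G : ℝ))^2 ≤ (2 * randic G) * (specRad G * (2 * (numEdges G : ℝ))) :=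
    le_trans hcs (mul_le_mul_of_nonneg_left hrayleigh (by linarith))
  have hkey : (numEdges G : ℝ) ≤ randic G * specRad G := by nlinarith
  have hμ : 0 < specRad G := by
    by_contra h
    push_neg at h
    have := mul_nonpos_of_nonneg_of_nonpos hR0 h
    linarith
  rw [ge_iff_le, div_le_iff₀ hμ]
  linarith [hkey]
end

section
/- For any connected graph G, √(s⁻(G)) ≤ R(G), where s⁻ is the sum of squares of the negative adjacency eigenvalues and R is the Randić index. -/
open Finset SimpleGraph

open Matrix
open scoped Classical

section SpecAux

variable {m : ℕ} {A : Matrix (Fin m) (Fin m) ℝ}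

private lemma trace_eq_sum_eig (hA : A.IsHermitian) : A.trace = ∑ i, hA.eigenvalues i := by
  set U := (hA.eigenvectorUnitary : Matrix (Fin m) (Fin m) ℝ) with hU
  have hsU : star U * U = 1 := Matrix.mem_unitaryGroup_iff'.mp hA.eigenvectorUnitary.2
  nth_rewrite 1 [hA.spectral_theorem]
  rw [Unitary.conjStarAlgAut_apply]
  rw [Matrix.trace_mul_cycle]
  rw [show star U * U * Matrix.diagonal (RCLike.ofReal ∘ hA.eigenvalues) = _ from by
    rw [hsU, Matrix.one_mul]]
  rw [Matrix.trace_diagonal]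
  simp

private lemma trace_sq_eq_sum_eig_sq (hA : A.IsHermitian) :
    (A * A).trace = ∑ i, hA.eigenvalues i ^ 2 := by
  set U := (hA.eigenvectorUnitary : Matrix (Fin m) (Fin m) ℝ) with hU
  have hsU : star U * U = 1 := Matrix.mem_unitaryGroup_iff'.mp hA.eigenvectorUnitary.2
  set D := (Matrix.diagonal (RCLike.ofReal ∘ hA.eigenvalues) : Matrix (Fin m) (Fin m) ℝ) with hD
  have hsq : A * A = U * (D * ((star U * U) * (D * star U))) := by
    conv_lhs => rw [hA.spectral_theorem, Unitary.conjStarAlgAut_apply]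
    simp only [Matrix.mul_assoc]
    rfl
  rw [hsq, hsU, Matrix.one_mul, Matrix.trace_mul_comm]
  simp only [Matrix.mul_assoc]
  rw [hsU, Matrix.mul_one, hD, Matrix.diagonal_mul_diagonal, Matrix.trace_diagonal]
  simp [sq]

private lemma rayleigh (hA : A.IsHermitian) (x : Fin m → ℝ) {μ : ℝ}
    (hμ : ∀ i, hA.eigenvalues i ≤ μ) :
    dotProduct x (A *ᵥ x) ≤ μ * dotProduct x x := by
  set U := (hA.eigenvectorUnitary : Matrix (Fin m) (Fin m) ℝ) with hUdef
  have hUs : U * star U = 1 := Matrix.mem_unitaryGroup_iff.mp hA.eigenvectorUnitary.2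
  set D := (Matrix.diagonal (RCLike.ofReal ∘ hA.eigenvalues) : Matrix (Fin m) (Fin m) ℝ) with hD
  have hstar : star U = Uᵀ := by
    rw [Matrix.star_eq_conjTranspose, Matrix.conjTranspose_eq_transpose_of_trivial]
  set y := star U *ᵥ x with hy
  have hyU : Matrix.vecMul x U = y := by
    rw [hy, hstar, Matrix.mulVec_transpose]
  have h1 : dotProduct x (A *ᵥ x) = dotProduct y (D *ᵥ y) := by
    nth_rewrite 1 [hA.spectral_theorem]
    rw [Unitary.conjStarAlgAut_apply]
    rw [← Matrix.mulVec_mulVec, ← Matrix.mulVec_mulVec, dotProduct_mulVec x U, hyU]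
  have h2 : dotProduct x x = dotProduct y y := by
    have hx : U *ᵥ y = x := by
      rw [hy, Matrix.mulVec_mulVec, hUs, Matrix.one_mulVec]
    nth_rewrite 2 [← hx]
    rw [dotProduct_mulVec x U, hyU]
  rw [h1, h2]
  have key : ∀ i, y i * (D *ᵥ y) i ≤ μ * (y i * y i) := by
    intro i
    rw [hD, Matrix.mulVec_diagonal]
    have h0 : (RCLike.ofReal ∘ hA.eigenvalues) i = hA.eigenvalues i := by simp
    rw [h0]
    nlinarith [mul_self_nonneg (y i), hμ i]
  calc dotProduct y (D *ᵥ y) = ∑ i, y i * (D *ᵥ y) i := rfl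
    _ ≤ ∑ i, μ * (y i * y i) := Finset.sum_le_sum fun i _ => key i
    _ = μ * dotProduct y y := by rw [← Finset.mul_sum]; rfl

end SpecAux

section GraphAux

variable {n : ℕ} (G : SimpleGraph (Fin n))

private lemma randic_nonneg : 0 ≤ randic G := by
  unfold randic
  apply mul_nonneg (by norm_num)
  apply Finset.sum_nonneg; intro i _
  apply Finset.sum_nonneg; intro j _
  split_ifs
  · positivity
  · exact le_rfl

private lemma degree_pos (hG : G.Connected) {x y : Fin n} (hxy : G.Adj x y) (v : Fin n) :
    0 < G.degree v := by
  rw [G.degree_pos_iff_exists_adj]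
  obtain ⟨p⟩ := hG.preconnected v x
  cases p with
  | nil => exact ⟨y, hxy⟩
  | cons h q => exact ⟨_, h⟩

private lemma sum_deg : ∑ i, ((G.degree i : ℝ)) = 2 * (G.edgeFinset.card : ℝ) := by
  rw [← Nat.cast_sum, SimpleGraph.sum_degrees_eq_twice_card_edges]
  push_cast
  ring

private lemma sum_ite_adj (i : Fin n) :
    ∑ j, (if G.Adj i j then (1 : ℝ) else 0) = (G.degree i : ℝ) := by
  rw [Finset.sum_boole]
  congr 1
  rw [SimpleGraph.degree, SimpleGraph.neighborFinset_eq_filter]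

end GraphAux

/-- for connected `G`, `√(s⁻(G)) ≤ R(G)`. -/
theorem sqrt_sNeg_le_randic {n : ℕ} (G : SimpleGraph (Fin n))
    (hG : G.Connected) : Real.sqrt (sNeg G) ≤ randic G := by
  have hRnn : 0 ≤ randic G := randic_nonneg G
  have hlam : adjEig G = (adjHerm G).eigenvalues := rfl
  set lam : Fin n → ℝ := (adjHerm G).eigenvalues with hlamdef
  set M : ℝ := (G.edgeFinset.card : ℝ) with hM
  have hsneg : sNeg G = ∑ i, (if lam i < 0 then lam i ^ 2 else 0) := rfl
  have snn : 0 ≤ sNeg G := by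
    rw [hsneg]
    apply Finset.sum_nonneg; intro i _
    split_ifs
    · exact sq_nonneg _
    · exact le_rfl
  have htr : ∑ i, lam i = 0 := by
    have h := trace_eq_sum_eig (adjHerm G)
    rw [SimpleGraph.trace_adjMatrix] at h
    exact h.symm
  have hsq : ∑ i, lam i ^ 2 = 2 * M := by
    have h := trace_sq_eq_sum_eig_sq (adjHerm G)
    have h2 : (G.adjMatrix ℝ * G.adjMatrix ℝ).trace = ∑ i, (G.degree i : ℝ) :=
      Finset.sum_congr rfl fun i _ => G.adjMatrix_mul_self_apply_self i
    rw [← h, h2, sum_deg]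
  have hsneg_le_sumsq : sNeg G ≤ ∑ i, lam i ^ 2 := by
    rw [hsneg]
    apply Finset.sum_le_sum; intro i _
    split_ifs
    · exact le_rfl
    · exact sq_nonneg _
  rcases Nat.eq_zero_or_pos G.edgeFinset.card with hm | hm
  · have hM0 : M = 0 := by rw [hM, hm]; norm_num
    have h0 : sNeg G = 0 := le_antisymm (by rw [hsq, hM0] at hsneg_le_sumsq; linarith) snn
    rw [h0, Real.sqrt_zero]; exact hRnn
  · have hMpos : 0 < M := by rw [hM]; exact_mod_cast hm
    obtain ⟨e, he⟩ := Finset.card_pos.mp hm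
    have hedge : ∃ x y : Fin n, G.Adj x y := by
      revert he
      induction e using Sym2.ind with
      | _ x y => exact fun he => ⟨x, y, G.mem_edgeSet.mp (SimpleGraph.mem_edgeFinset.mp he)⟩
    obtain ⟨x0, y0, hxy⟩ := hedge
    have hdeg : ∀ v, 0 < G.degree v := degree_pos G hG hxy
    have hdpos : ∀ i, (0 : ℝ) < (G.degree i : ℝ) := fun i => by exact_mod_cast hdeg i
    have hne : Nonempty (Fin n) := ⟨x0⟩
    set μ := specRad G with hmu
    have hspec : μ = ⨆ i, lam i := rfl
    have hbdd : BddAbove (Set.range lam) := (Set.finite_range lam).bddAbove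
    have hle : ∀ i, lam i ≤ μ := fun i => hspec ▸ le_ciSup hbdd i
    obtain ⟨i0, -, hmax⟩ := Finset.exists_max_image Finset.univ lam ⟨x0, Finset.mem_univ x0⟩
    have hμeq : μ = lam i0 :=
      le_antisymm (by rw [hspec]; exact ciSup_le fun i => hmax i (Finset.mem_univ i)) (hle i0)
    have hex : ∃ k, lam k ≠ 0 := by
      by_contra hcon; push_neg at hcon
      have h0 : ∑ i, lam i ^ 2 = 0 := Finset.sum_eq_zero fun i _ => by rw [hcon i]; ring
      rw [hsq] at h0; linarith
    obtain ⟨k, hk⟩ := hex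
    have hμpos : 0 < μ := by
      rcases lt_or_ge 0 (lam i0) with h | h
      · rw [hμeq]; exact h
      · exfalso
        have hall : ∀ i ∈ Finset.univ, lam i ≤ 0 :=
          fun i _ => le_trans (hmax i (Finset.mem_univ i)) h
        exact hk ((Finset.sum_eq_zero_iff_of_nonpos hall).mp htr k (Finset.mem_univ k))
    -- Rayleigh with x i = √(dᵢ)
    set x : Fin n → ℝ := fun i => Real.sqrt ((G.degree i : ℝ)) with hx
    have hray := rayleigh (adjHerm G) x hle
    set S1 : ℝ := ∑ i, ∑ j,
        (if G.Adj i j then Real.sqrt ((G.degree i : ℝ) * (G.degree j : ℝ)) else 0) with hS1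
    have hxAx : dotProduct x (G.adjMatrix ℝ *ᵥ x) = S1 := by
      rw [hS1]
      simp only [dotProduct, Matrix.mulVec]
      apply Finset.sum_congr rfl; intro i _
      rw [Finset.mul_sum]
      apply Finset.sum_congr rfl; intro j _
      rw [SimpleGraph.adjMatrix_apply]
      split_ifs with h
      · rw [one_mul, hx]
        exact (Real.sqrt_mul (hdpos i).le _).symm
      · ring
    have hxx : dotProduct x x = 2 * M := by
      simp only [dotProduct, hx]
      rw [Finset.sum_congr rfl fun i _ => Real.mul_self_sqrt (hdpos i).le]
      exact sum_deg G
    have hS1le : S1 ≤ μ * (2 * M) := by rw [← hxAx, ← hxx]; exact hray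
    set S2 : ℝ := ∑ i, ∑ j,
        (if G.Adj i j then 1 / Real.sqrt ((G.degree i : ℝ) * (G.degree j : ℝ)) else 0) with hS2
    have hrand : randic G = (1 / 2) * S2 := rfl
    have hS2nn : 0 ≤ S2 := by
      rw [hS2]
      apply Finset.sum_nonneg; intro i _
      apply Finset.sum_nonneg; intro j _
      split_ifs
      · positivity
      · exact le_rfl
    have hCS : (2 * M) ^ 2 ≤ S1 * S2 := by
      have key := Finset.sum_mul_sq_le_sq_mul_sq (Finset.univ ×ˢ Finset.univ)
        (fun p : Fin n × Fin n =>
          if G.Adj p.1 p.2 then Real.sqrt (Real.sqrt ((G.degree p.1 : ℝ) * (G.degree p.2 : ℝ)))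
          else 0)
        (fun p : Fin n × Fin n =>
          if G.Adj p.1 p.2 then
            1 / Real.sqrt (Real.sqrt ((G.degree p.1 : ℝ) * (G.degree p.2 : ℝ)))
          else 0)
      have hprodpos : ∀ i j : Fin n,
          0 < Real.sqrt (Real.sqrt ((G.degree i : ℝ) * (G.degree j : ℝ))) := by
        intro i j
        have : (0 : ℝ) < (G.degree i : ℝ) * (G.degree j : ℝ) := mul_pos (hdpos i) (hdpos j)
        positivity
      have e1 : ∑ p ∈ Finset.univ ×ˢ Finset.univ,
          ((if G.Adj p.1 p.2 then
              Real.sqrt (Real.sqrt ((G.degree p.1 : ℝ) * (G.degree p.2 : ℝ))) else 0) *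
            (if G.Adj p.1 p.2 then
              1 / Real.sqrt (Real.sqrt ((G.degree p.1 : ℝ) * (G.degree p.2 : ℝ))) else 0))
          = 2 * M := by
        rw [Finset.sum_product]
        have : ∀ i j : Fin n,
            ((if G.Adj i j then
                Real.sqrt (Real.sqrt ((G.degree i : ℝ) * (G.degree j : ℝ))) else 0) *
              (if G.Adj i j then
                1 / Real.sqrt (Real.sqrt ((G.degree i : ℝ) * (G.degree j : ℝ))) else 0))
            = (if G.Adj i j then (1 : ℝ) else 0) := by
          intro i j
          split_ifs with h
          · exact mul_one_div_cancel (hprodpos i j).ne'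
          · ring
        calc ∑ i, ∑ j, _ = ∑ i, ∑ j, (if G.Adj i j then (1:ℝ) else 0) :=
              Finset.sum_congr rfl fun i _ => Finset.sum_congr rfl fun j _ => this i j
          _ = ∑ i, (G.degree i : ℝ) := Finset.sum_congr rfl fun i _ => sum_ite_adj G i
          _ = 2 * M := sum_deg G
      have e2 : ∑ p ∈ Finset.univ ×ˢ Finset.univ,
          (if G.Adj p.1 p.2 then
              Real.sqrt (Real.sqrt ((G.degree p.1 : ℝ) * (G.degree p.2 : ℝ))) else 0) ^ 2
          = S1 := by
        rw [Finset.sum_product, hS1]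
        apply Finset.sum_congr rfl; intro i _
        apply Finset.sum_congr rfl; intro j _
        split_ifs with h
        · exact Real.sq_sqrt (Real.sqrt_nonneg _)
        · ring
      have e3 : ∑ p ∈ Finset.univ ×ˢ Finset.univ,
          (if G.Adj p.1 p.2 then
              1 / Real.sqrt (Real.sqrt ((G.degree p.1 : ℝ) * (G.degree p.2 : ℝ))) else 0) ^ 2
          = S2 := by
        rw [Finset.sum_product, hS2]
        apply Finset.sum_congr rfl; intro i _
        apply Finset.sum_congr rfl; intro j _
        split_ifs with h
        · rw [div_pow, one_pow, Real.sq_sqrt (Real.sqrt_nonneg _)]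
        · ring
      rw [e1, e2, e3] at key
      exact key
    have hMμR : M ≤ μ * randic G := by
      have h4 : (2 * M) ^ 2 ≤ (μ * (2 * M)) * S2 :=
        le_trans hCS (mul_le_mul_of_nonneg_right hS1le hS2nn)
      rw [hrand]
      nlinarith [hMpos, hμpos]
    have hsNeg_le : sNeg G ≤ 2 * M - μ ^ 2 := by
      have hzero : (if lam i0 < 0 then lam i0 ^ 2 else 0) = 0 :=
        if_neg (not_lt.mpr (le_of_lt (hμeq ▸ hμpos)))
      have hsplit : (if lam i0 < 0 then lam i0 ^ 2 else 0) +
          ∑ i ∈ Finset.univ.erase i0, (if lam i < 0 then lam i ^ 2 else 0)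
          = ∑ i, (if lam i < 0 then lam i ^ 2 else 0) :=
        Finset.add_sum_erase Finset.univ (fun i => if lam i < 0 then lam i ^ 2 else 0)
          (Finset.mem_univ i0)
      have h5 : ∑ i ∈ Finset.univ.erase i0, (if lam i < 0 then lam i ^ 2 else 0)
          ≤ ∑ i ∈ Finset.univ.erase i0, lam i ^ 2 :=
        Finset.sum_le_sum fun i _ => by split_ifs; exacts [le_rfl, sq_nonneg _]
      have h6 : lam i0 ^ 2 + ∑ i ∈ Finset.univ.erase i0, lam i ^ 2 = ∑ i, lam i ^ 2 :=
        Finset.add_sum_erase Finset.univ (fun i => lam i ^ 2) (Finset.mem_univ i0)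
      rw [hsneg, ← hsplit, hzero, zero_add]
      have : lam i0 ^ 2 = μ ^ 2 := by rw [hμeq]
      linarith [h5, h6, hsq.le, hsq.ge]
    have hfinal : Real.sqrt (sNeg G) ≤ M / μ := by
      have hb : sNeg G ≤ (M / μ) ^ 2 := by
        rw [div_pow, le_div_iff₀ (by positivity)]
        nlinarith [sq_nonneg (M - μ ^ 2), hμpos]
      calc Real.sqrt (sNeg G) ≤ Real.sqrt ((M / μ) ^ 2) := Real.sqrt_le_sqrt hb
        _ = M / μ := Real.sqrt_sq (by positivity)
    calc Real.sqrt (sNeg G) ≤ M / μ := hfinal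
      _ ≤ randic G := by
        rw [div_le_iff₀ hμpos]
        exact le_trans hMμR (le_of_eq (mul_comm _ _))
end

section
/- For any connected bipartite graph G, √(s⁺(G)) ≤ R(G), where R is the Randić index. -/
open Finset SimpleGraph

/-! ### Auxiliary spectral lemmas -/

section Aux

open Matrix Polynomial

lemma auxDetConjUnitary {n : ℕ} (U : Matrix.unitaryGroup (Fin n) ℝ) (M : Matrix (Fin n) (Fin n) ℝ) :
    ((U : Matrix (Fin n) (Fin n) ℝ) * M * star (U : Matrix (Fin n) (Fin n) ℝ)).det = M.det := by
  have h1 : (star (U : Matrix (Fin n) (Fin n) ℝ) * U).det = 1 := by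
    rw [Unitary.coe_star_mul_self]; exact det_one
  rw [det_mul] at h1
  rw [det_mul, det_mul]
  linear_combination M.det * h1

lemma auxSmulOneSubDiag {n : ℕ} (x : ℝ) (f : Fin n → ℝ) :
    x • (1 : Matrix (Fin n) (Fin n) ℝ) - diagonal f = diagonal (fun i => x - f i) := by
  ext i j
  by_cases h : i = j <;>
    simp [Matrix.sub_apply, Matrix.smul_apply, Matrix.one_apply, Matrix.diagonal_apply, h]

lemma auxSmulOneAddDiag {n : ℕ} (x : ℝ) (f : Fin n → ℝ) :
    x • (1 : Matrix (Fin n) (Fin n) ℝ) + diagonal f = diagonal (fun i => x + f i) := by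
  ext i j
  by_cases h : i = j <;>
    simp [Matrix.add_apply, Matrix.smul_apply, Matrix.one_apply, Matrix.diagonal_apply, h]

lemma auxConjSmulOne {n : ℕ} (U : Matrix.unitaryGroup (Fin n) ℝ) (x : ℝ) :
    (U : Matrix (Fin n) (Fin n) ℝ) * (x • (1 : Matrix (Fin n) (Fin n) ℝ)) *
      star (U : Matrix (Fin n) (Fin n) ℝ) = x • 1 := by
  rw [Matrix.mul_smul, mul_one, Matrix.smul_mul, Matrix.mem_unitaryGroup_iff.mp U.2]

lemma auxDetSmulOneSub {n : ℕ} (A : Matrix (Fin n) (Fin n) ℝ) (hA : A.IsHermitian) (x : ℝ) :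
    (x • (1 : Matrix (Fin n) (Fin n) ℝ) - A).det = ∏ i, (x - hA.eigenvalues i) := by
  conv_lhs => rw [hA.spectral_theorem, Unitary.conjStarAlgAut_apply]
  have key : x • (1 : Matrix (Fin n) (Fin n) ℝ) -
      (hA.eigenvectorUnitary : Matrix (Fin n) (Fin n) ℝ) * diagonal (RCLike.ofReal ∘ hA.eigenvalues) *
        star (hA.eigenvectorUnitary : Matrix (Fin n) (Fin n) ℝ)
      = (hA.eigenvectorUnitary : Matrix (Fin n) (Fin n) ℝ) *
          (diagonal (fun i => x - hA.eigenvalues i)) *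
          star (hA.eigenvectorUnitary : Matrix (Fin n) (Fin n) ℝ) := by
    conv_lhs => rw [← auxConjSmulOne hA.eigenvectorUnitary x]
    rw [← sub_mul, ← mul_sub]
    congr 1
    rw [RCLike.ofReal_real_eq_id]
    rw [show (id ∘ hA.eigenvalues) = hA.eigenvalues from rfl, auxSmulOneSubDiag]
  rw [key, auxDetConjUnitary hA.eigenvectorUnitary, det_diagonal]

lemma auxDetSmulOneAdd {n : ℕ} (A : Matrix (Fin n) (Fin n) ℝ) (hA : A.IsHermitian) (x : ℝ) :
    (x • (1 : Matrix (Fin n) (Fin n) ℝ) + A).det = ∏ i, (x + hA.eigenvalues i) := by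
  conv_lhs => rw [hA.spectral_theorem, Unitary.conjStarAlgAut_apply]
  have key : x • (1 : Matrix (Fin n) (Fin n) ℝ) +
      (hA.eigenvectorUnitary : Matrix (Fin n) (Fin n) ℝ) * diagonal (RCLike.ofReal ∘ hA.eigenvalues) *
        star (hA.eigenvectorUnitary : Matrix (Fin n) (Fin n) ℝ)
      = (hA.eigenvectorUnitary : Matrix (Fin n) (Fin n) ℝ) *
          (diagonal (fun i => x + hA.eigenvalues i)) *
          star (hA.eigenvectorUnitary : Matrix (Fin n) (Fin n) ℝ) := by
    conv_lhs => rw [← auxConjSmulOne hA.eigenvectorUnitary x]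
    rw [← add_mul, ← mul_add]
    congr 1
    rw [RCLike.ofReal_real_eq_id]
    rw [show (id ∘ hA.eigenvalues) = hA.eigenvalues from rfl, auxSmulOneAddDiag]
  rw [key, auxDetConjUnitary hA.eigenvectorUnitary, det_diagonal]

lemma auxTraceSq {n : ℕ} (A : Matrix (Fin n) (Fin n) ℝ) (hA : A.IsHermitian) :
    (A * A).trace = ∑ i, (hA.eigenvalues i) ^ 2 := by
  conv_lhs => rw [hA.spectral_theorem, Unitary.conjStarAlgAut_apply]
  set U := (hA.eigenvectorUnitary : Matrix (Fin n) (Fin n) ℝ)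
  set D := diagonal (RCLike.ofReal ∘ hA.eigenvalues : Fin n → ℝ)
  have h1 : (U * D * star U) * (U * D * star U) = U * (D * D) * star U := by
    have h : star U * U = 1 := Unitary.coe_star_mul_self _
    calc (U * D * star U) * (U * D * star U)
        = U * D * ((star U * U) * (D * star U)) := by simp only [mul_assoc]
      _ = U * (D * D) * star U := by rw [h, one_mul]; simp only [mul_assoc]
  rw [h1, Matrix.trace_mul_cycle, ← mul_assoc, Unitary.coe_star_mul_self, one_mul]
  rw [show D * D = diagonal (fun i => (hA.eigenvalues i)^2) by
    rw [diagonal_mul_diagonal]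
    congr 1
    funext i
    simp [RCLike.ofReal_real_eq_id, sq]]
  simp [Matrix.trace_diagonal]

lemma auxMultisetSym {n : ℕ} (lam : Fin n → ℝ)
    (h : ∀ x : ℝ, ∏ i, (x - lam i) = ∏ i, (x + lam i)) :
    Multiset.map lam Finset.univ.val = Multiset.map (fun i => - lam i) Finset.univ.val := by
  have hp : (Multiset.map (fun a => X - C a) (Multiset.map lam Finset.univ.val)).prod
      = (Multiset.map (fun a => X - C a) (Multiset.map (fun i => - lam i) Finset.univ.val)).prod := by
    apply Polynomial.funext
    intro r
    rw [Polynomial.eval_multiset_prod, Polynomial.eval_multiset_prod]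
    rw [Multiset.map_map, Multiset.map_map, Multiset.map_map, Multiset.map_map]
    have e1 : Multiset.map ((Polynomial.eval r ∘ fun a => X - C a) ∘ lam) Finset.univ.val
        = Multiset.map (fun i => r - lam i) Finset.univ.val :=
      Multiset.map_congr rfl (fun i _ => by simp)
    have e2 : Multiset.map ((Polynomial.eval r ∘ fun a => X - C a) ∘ fun i => - lam i) Finset.univ.val
        = Multiset.map (fun i => r + lam i) Finset.univ.val :=
      Multiset.map_congr rfl (fun i _ => by simp [sub_neg_eq_add])
    rw [e1, e2, ← Finset.prod_eq_multiset_prod, ← Finset.prod_eq_multiset_prod]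
    exact h r
  have := congrArg Polynomial.roots hp
  rwa [Polynomial.roots_multiset_prod_X_sub_C, Polynomial.roots_multiset_prod_X_sub_C] at this

open scoped Classical in
lemma auxSignedConj {n : ℕ} (G : SimpleGraph (Fin n)) (C : G.Coloring (Fin 2)) :
    (diagonal (fun i => if C i = 0 then (1:ℝ) else -1)) * (G.adjMatrix ℝ) *
      (diagonal (fun i => if C i = 0 then (1:ℝ) else -1)) = - G.adjMatrix ℝ := by
  ext i j
  rw [Matrix.mul_diagonal, Matrix.diagonal_mul]
  by_cases h : G.Adj i j
  · have hC : C i ≠ C j := C.valid h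
    simp only [SimpleGraph.adjMatrix_apply, if_pos h, Matrix.neg_apply, if_pos h]
    have h2 : ∀ a : Fin 2, a = 0 ∨ a = 1 := by decide
    rcases h2 (C i) with hi | hi <;> rcases h2 (C j) with hj | hj <;>
      rw [hi, hj] at hC ⊢ <;> simp at hC ⊢
  · simp [SimpleGraph.adjMatrix_apply, if_neg h, h]

open scoped Classical in
lemma auxEigSym {n : ℕ} (G : SimpleGraph (Fin n)) (hb : G.Colorable 2) :
    Multiset.map (adjEig G) Finset.univ.val
      = Multiset.map (fun i => - adjEig G i) Finset.univ.val := by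
  obtain ⟨C⟩ := hb
  set A := G.adjMatrix ℝ with hAdef
  have hA : A.IsHermitian := adjHerm G
  apply auxMultisetSym
  intro x
  have hsub := auxDetSmulOneSub A hA x
  have hadd := auxDetSmulOneAdd A hA x
  set Dm := diagonal (fun i => if C i = 0 then (1:ℝ) else -1) with hDm
  have hDm2 : Dm * Dm = 1 := by
    rw [hDm, diagonal_mul_diagonal]
    rw [show (fun i => (if C i = 0 then (1:ℝ) else -1) * (if C i = 0 then (1:ℝ) else -1))
        = fun _ => (1:ℝ) by funext i; by_cases h : C i = 0 <;> simp [h]]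
    exact diagonal_one
  have hconj : Dm * (x • (1 : Matrix (Fin n) (Fin n) ℝ) - A) * Dm
      = x • (1 : Matrix (Fin n) (Fin n) ℝ) + A := by
    rw [mul_sub, sub_mul]
    have e1 : Dm * (x • (1 : Matrix (Fin n) (Fin n) ℝ)) * Dm = x • 1 := by
      rw [Matrix.mul_smul, mul_one, Matrix.smul_mul, hDm2]
    have e2 : Dm * A * Dm = -A := auxSignedConj G C
    rw [e1, e2, sub_neg_eq_add]
  have hdet : (x • (1 : Matrix (Fin n) (Fin n) ℝ) - A).det
      = (x • (1 : Matrix (Fin n) (Fin n) ℝ) + A).det := by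
    conv_rhs => rw [← hconj]
    rw [det_mul, det_mul]
    have : Dm.det * Dm.det = 1 := by rw [← det_mul, hDm2, det_one]
    linear_combination ((x • (1 : Matrix (Fin n) (Fin n) ℝ) - A).det) * this.symm
  have : (∏ i, (x - hA.eigenvalues i)) = ∏ i, (x + hA.eigenvalues i) := by
    rw [← hsub, ← hadd, hdet]
  convert this using 1
  all_goals rfl

open scoped Classical in
lemma auxSPosEqSNeg {n : ℕ} (G : SimpleGraph (Fin n)) (hb : G.Colorable 2) :
    sPos G = sNeg G := by
  have hsym := auxEigSym G hb
  set f : ℝ → ℝ := fun x => if 0 < x then x ^ 2 else 0 with hf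
  have h1 : sPos G = (Multiset.map f (Multiset.map (adjEig G) Finset.univ.val)).sum := by
    rw [Multiset.map_map, sPos, Finset.sum_eq_multiset_sum]
    rfl
  have h2 : (Multiset.map f (Multiset.map (fun i => - adjEig G i) Finset.univ.val)).sum
      = sNeg G := by
    rw [Multiset.map_map, sNeg, Finset.sum_eq_multiset_sum]
    congr 1
    apply Multiset.map_congr rfl
    intro i _
    simp only [Function.comp_apply, hf]
    by_cases h : adjEig G i < 0
    · rw [if_pos (by linarith), if_pos h]; ring
    · rw [if_neg (by simpa using h), if_neg h]
  rw [h1, hsym, h2]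

end Aux
section Aux2
open Matrix

open scoped Classical in
lemma auxSPosEqM {n : ℕ} (G : SimpleGraph (Fin n)) (hb : G.Colorable 2) :
    sPos G = (numEdges G : ℝ) := by
  have hA : (G.adjMatrix ℝ).IsHermitian := adjHerm G
  have htr : ((G.adjMatrix ℝ) * (G.adjMatrix ℝ)).trace = ∑ i, (adjEig G i) ^ 2 :=
    auxTraceSq _ hA
  have htr2 : ((G.adjMatrix ℝ) * (G.adjMatrix ℝ)).trace = 2 * (numEdges G : ℝ) := by
    rw [Matrix.trace]
    have : ∀ i, ((G.adjMatrix ℝ) * (G.adjMatrix ℝ)).diag i = (G.degree i : ℝ) := fun i =>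
      SimpleGraph.adjMatrix_mul_self_apply_self G i
    rw [Finset.sum_congr rfl fun i _ => this i]
    rw [show (∑ i, (G.degree i : ℝ)) = ((∑ i, G.degree i : ℕ) : ℝ) by push_cast; ring]
    rw [SimpleGraph.sum_degrees_eq_twice_card_edges]
    push_cast
    rfl
  have hsum : sPos G + sNeg G = 2 * (numEdges G : ℝ) := by
    rw [sPos, sNeg, ← Finset.sum_add_distrib, ← htr2, htr]
    apply Finset.sum_congr rfl
    intro i _
    rcases lt_trichotomy (adjEig G i) 0 with h | h | h
    · rw [if_neg (by linarith), if_pos h, zero_add]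
    · rw [if_neg (by linarith), if_neg (by linarith), h]; ring
    · rw [if_pos h, if_neg (by linarith), add_zero]
  have heq := auxSPosEqSNeg G hb
  linarith

end Aux2
section Aux3

open scoped Classical

lemma auxNoTri {n : ℕ} {G : SimpleGraph (Fin n)} (C : G.Coloring (Fin 2)) {i a b : Fin n}
    (ha : G.Adj i a) (hb : G.Adj i b) (hab : G.Adj a b) : False := by
  have h1 : C i ≠ C a := C.valid ha
  have h2 : C i ≠ C b := C.valid hb
  have h3 : C a ≠ C b := C.valid hab
  have h4 : ∀ x : Fin 2, x = 0 ∨ x = 1 := by decide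
  rcases h4 (C i) with hi | hi <;> rcases h4 (C a) with haa | haa <;>
    rcases h4 (C b) with hbb | hbb <;>
    simp [hi, haa, hbb] at h1 h2 h3

lemma auxDegSumLe {n : ℕ} (G : SimpleGraph (Fin n)) (C : G.Coloring (Fin 2)) (i : Fin n) :
    ∑ j ∈ G.neighborFinset i, G.degree j ≤ numEdges G := by
  have hcard : ∑ j ∈ G.neighborFinset i, G.degree j
      = ((G.neighborFinset i).sigma (fun j => G.neighborFinset j)).card := by
    rw [Finset.card_sigma]
    exact Finset.sum_congr rfl fun j _ => (G.card_neighborFinset_eq_degree j).symm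
  rw [hcard, numEdges]
  apply Finset.card_le_card_of_injOn (fun p => s(p.1, p.2))
  · intro p hp
    rw [Finset.mem_coe, Finset.mem_sigma] at hp
    rw [Finset.mem_coe, SimpleGraph.mem_edgeFinset, SimpleGraph.mem_edgeSet]
    exact (G.mem_neighborFinset _ _).mp hp.2
  · intro p hp q hq heq
    rw [Finset.mem_coe, Finset.mem_sigma] at hp hq
    simp only at heq
    rw [Sym2.eq_iff] at heq
    rcases heq with ⟨h1, h2⟩ | ⟨h1, h2⟩
    · exact Sigma.ext h1 (heq_of_eq h2)
    · exfalso
      have hadj : G.Adj q.1 q.2 := (G.mem_neighborFinset _ _).mp hq.2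
      have hq1 : G.Adj i q.1 := (G.mem_neighborFinset _ _).mp hq.1
      have hq2 : G.Adj i q.2 := h1 ▸ (G.mem_neighborFinset _ _).mp hp.1
      exact auxNoTri C hq1 hq2 hadj

lemma auxPairCard {n : ℕ} (G : SimpleGraph (Fin n)) :
    (Finset.univ.filter (fun p : Fin n × Fin n => G.Adj p.1 p.2)).card = 2 * numEdges G := by
  rw [Finset.card_filter, Fintype.sum_prod_type]
  have h : ∀ i, (∑ j, if G.Adj i j then 1 else 0) = G.degree i := by
    intro i
    rw [← SimpleGraph.card_neighborFinset_eq_degree, SimpleGraph.neighborFinset_eq_filter,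
      Finset.card_filter]
  rw [Finset.sum_congr rfl fun i _ => h i, SimpleGraph.sum_degrees_eq_twice_card_edges]
  rfl

lemma auxPBound {n : ℕ} (G : SimpleGraph (Fin n)) (C : G.Coloring (Fin 2)) :
    ∑ p ∈ Finset.univ.filter (fun p : Fin n × Fin n => G.Adj p.1 p.2),
        ((G.degree p.1 : ℝ) * (G.degree p.2 : ℝ))
      ≤ 2 * (numEdges G : ℝ) * (numEdges G : ℝ) := by
  rw [Finset.sum_filter, Fintype.sum_prod_type]
  have inner : ∀ i, (∑ j, if G.Adj i j then (G.degree i : ℝ) * (G.degree j : ℝ) else 0)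
      ≤ (G.degree i : ℝ) * (numEdges G : ℝ) := by
    intro i
    have e1 : (∑ j, if G.Adj i j then (G.degree i : ℝ) * (G.degree j : ℝ) else 0)
        = (G.degree i : ℝ) * ∑ j ∈ G.neighborFinset i, (G.degree j : ℝ) := by
      rw [Finset.mul_sum, SimpleGraph.neighborFinset_eq_filter, Finset.sum_filter]
    rw [e1]
    apply mul_le_mul_of_nonneg_left _ (by positivity)
    have := auxDegSumLe G C i
    calc (∑ j ∈ G.neighborFinset i, (G.degree j : ℝ))
        = ((∑ j ∈ G.neighborFinset i, G.degree j : ℕ) : ℝ) := by push_cast; ring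
      _ ≤ (numEdges G : ℝ) := by exact_mod_cast this
  calc (∑ i, ∑ j, if G.Adj i j then (G.degree i : ℝ) * (G.degree j : ℝ) else 0)
      ≤ ∑ i, (G.degree i : ℝ) * (numEdges G : ℝ) := Finset.sum_le_sum fun i _ => inner i
    _ = ((∑ i, G.degree i : ℕ) : ℝ) * (numEdges G : ℝ) := by rw [← Finset.sum_mul]; push_cast; ring
    _ = 2 * (numEdges G : ℝ) * (numEdges G : ℝ) := by
        rw [SimpleGraph.sum_degrees_eq_twice_card_edges]; push_cast; rfl

end Aux3
/-- for a connected bipartite graph, `√(s⁺(G)) ≤ R(G)`. -/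
theorem sqrt_sPos_le_randic_of_bipartite {n : ℕ} (G : SimpleGraph (Fin n))
    (hG : G.Connected) (hb : G.Colorable 2) :
    Real.sqrt (sPos G) ≤ randic G := by
  classical
  obtain ⟨C⟩ := hb
  have hsPos : sPos G = (numEdges G : ℝ) := auxSPosEqM G ⟨C⟩
  set mR : ℝ := (numEdges G : ℝ) with hmR
  have hmR0 : 0 ≤ mR := by positivity
  set e := Finset.univ.filter (fun p : Fin n × Fin n => G.Adj p.1 p.2) with he
  set w : Fin n × Fin n → ℝ := fun p => (G.degree p.1 : ℝ) * (G.degree p.2 : ℝ) with hw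
  set T : ℝ := ∑ p ∈ e, 1 / Real.sqrt (w p) with hT
  have hrandic : randic G = (1/2) * T := by
    rw [randic, hT, he, Finset.sum_filter, Fintype.sum_prod_type]
  have hw1 : ∀ p ∈ e, 1 ≤ w p := by
    intro p hp
    rw [he, Finset.mem_filter] at hp
    have h1 : 1 ≤ G.degree p.1 := (G.degree_pos_iff_exists_adj p.1).mpr ⟨p.2, hp.2⟩
    have h2 : 1 ≤ G.degree p.2 := (G.degree_pos_iff_exists_adj p.2).mpr ⟨p.1, hp.2.symm⟩
    have h1' : (1:ℝ) ≤ (G.degree p.1 : ℝ) := by exact_mod_cast h1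
    have h2' : (1:ℝ) ≤ (G.degree p.2 : ℝ) := by exact_mod_cast h2
    have hwp : w p = (G.degree p.1 : ℝ) * (G.degree p.2 : ℝ) := rfl
    rw [hwp]
    nlinarith
  have hTnn : 0 ≤ T := by
    rw [hT]
    apply Finset.sum_nonneg
    intro p _
    positivity
  by_cases hm : numEdges G = 0
  · have hmz : mR = 0 := by rw [hmR, hm]; norm_num
    rw [hsPos, hrandic, hmz, Real.sqrt_zero]
    linarith
  · have hm1 : (1:ℝ) ≤ mR := by
      rw [hmR]; exact_mod_cast Nat.one_le_iff_ne_zero.mpr hm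
    have hcard : (e.card : ℝ) = 2 * mR := by
      rw [he, hmR]; exact_mod_cast auxPairCard G
    set S : ℝ := ∑ p ∈ e, Real.sqrt (w p) with hS
    have hSge : (e.card : ℝ) ≤ S := by
      calc (e.card : ℝ) = ∑ p ∈ e, (1:ℝ) := by rw [Finset.sum_const, nsmul_eq_mul, mul_one]
        _ ≤ S := by
            rw [hS]
            apply Finset.sum_le_sum
            intro p hp
            have := Real.sqrt_le_sqrt (hw1 p hp)
            rwa [Real.sqrt_one] at this
    have hSpos : 0 < S := by
      have : (0:ℝ) < (e.card : ℝ) := by rw [hcard]; linarith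
      linarith
    -- Cauchy-Schwarz 1 : card² ≤ S * T
    have CS1 : (e.card : ℝ)^2 ≤ S * T := by
      have h := sum_mul_sq_le_sq_mul_sq e (fun p => Real.sqrt (Real.sqrt (w p)))
        (fun p => 1 / Real.sqrt (Real.sqrt (w p)))
      have e0 : ∀ p ∈ e, 0 < Real.sqrt (Real.sqrt (w p)) := by
        intro p hp
        have := hw1 p hp
        positivity
      have l1 : (∑ p ∈ e, Real.sqrt (Real.sqrt (w p)) * (1 / Real.sqrt (Real.sqrt (w p))))
          = (e.card : ℝ) := by
        rw [Finset.sum_congr rfl fun p hp => mul_one_div_cancel (ne_of_gt (e0 p hp))]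
        rw [Finset.sum_const, nsmul_eq_mul, mul_one]
      have l2 : (∑ p ∈ e, Real.sqrt (Real.sqrt (w p)) ^ 2) = S := by
        rw [hS]
        exact Finset.sum_congr rfl fun p hp => Real.sq_sqrt (Real.sqrt_nonneg _)
      have l3 : (∑ p ∈ e, (1 / Real.sqrt (Real.sqrt (w p))) ^ 2) = T := by
        rw [hT]
        apply Finset.sum_congr rfl
        intro p hp
        rw [div_pow, one_pow, Real.sq_sqrt (Real.sqrt_nonneg _)]
      rw [l1, l2, l3] at h
      exact h
    -- Cauchy-Schwarz 2 : S² ≤ card * P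
    have CS2 : S^2 ≤ (e.card : ℝ) * ∑ p ∈ e, w p := by
      have h := sum_mul_sq_le_sq_mul_sq e (fun _ => (1:ℝ)) (fun p => Real.sqrt (w p))
      have l1 : (∑ p ∈ e, (1:ℝ) * Real.sqrt (w p)) = S := by
        rw [hS]; exact Finset.sum_congr rfl fun p hp => one_mul _
      have l2 : (∑ p ∈ e, (1:ℝ)^2) = (e.card : ℝ) := by
        simp
      have l3 : (∑ p ∈ e, Real.sqrt (w p) ^ 2) = ∑ p ∈ e, w p :=
        Finset.sum_congr rfl fun p hp => Real.sq_sqrt (by linarith [hw1 p hp])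
      rw [l1, l2, l3] at h
      exact h
    have hP : (∑ p ∈ e, w p) ≤ 2 * mR * mR := by
      rw [he, hw, hmR]
      exact auxPBound G C
    have hSsq : S^2 ≤ 4 * mR^3 := by
      calc S^2 ≤ (e.card : ℝ) * ∑ p ∈ e, w p := CS2
        _ ≤ (2 * mR) * (2 * mR * mR) := by
            rw [hcard]
            apply mul_le_mul_of_nonneg_left hP (by linarith)
        _ = 4 * mR^3 := by ring
    have hSle : S ≤ Real.sqrt (4 * mR^3) := by
      have := Real.sqrt_le_sqrt hSsq
      rwa [Real.sqrt_sq (le_of_lt hSpos)] at this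
    have c1 : Real.sqrt mR * Real.sqrt (4 * mR^3) = 2 * mR^2 := by
      rw [← Real.sqrt_mul hmR0, show mR * (4 * mR^3) = (2 * mR^2)^2 by ring,
        Real.sqrt_sq (by positivity)]
    have key : 2 * Real.sqrt mR * S ≤ 4 * mR^2 := by
      calc 2 * Real.sqrt mR * S ≤ 2 * Real.sqrt mR * Real.sqrt (4 * mR^3) := by
            apply mul_le_mul_of_nonneg_left hSle (by positivity)
        _ = 2 * (2 * mR^2) := by rw [mul_assoc, c1]
        _ ≤ 4 * mR^2 := by linarith
    have h1 : 2 * Real.sqrt mR ≤ (e.card : ℝ)^2 / S := by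
      rw [le_div_iff₀ hSpos, hcard]
      nlinarith [key]
    have h2 : (e.card : ℝ)^2 / S ≤ T := by
      rw [div_le_iff₀ hSpos]
      nlinarith [CS1]
    rw [hsPos, hrandic]
    linarith
end

section
/- For any graph G on n vertices, the sum of squares of the negative adjacency eigenvalues satisfies s⁻(G) ≤ n²/4. -/
open Finset SimpleGraph

open Matrix

section aux
variable {m : Type*} [Fintype m] [DecidableEq m] {A : Matrix m m ℝ} (hA : A.IsHermitian)

lemma myRayleigh (x : m → ℝ) :
    x ⬝ᵥ (A *ᵥ x) =
      ∑ i, hA.eigenvalues i * (((star (hA.eigenvectorUnitary : Matrix m m ℝ)) *ᵥ x) i) ^ 2 := by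
  set U := (hA.eigenvectorUnitary : Matrix m m ℝ) with hU
  set y := (star U) *ᵥ x with hy
  conv_lhs => rw [hA.spectral_theorem, Unitary.conjStarAlgAut_apply]
  rw [← Matrix.mulVec_mulVec, ← Matrix.mulVec_mulVec, Matrix.dotProduct_mulVec]
  have hvm : x ᵥ* U = y := by
    rw [hy, Matrix.star_eq_conjTranspose, Matrix.conjTranspose_eq_transpose_of_trivial, ← Matrix.mulVec_transpose]
  rw [hvm]
  simp only [dotProduct, Matrix.mulVec_diagonal, Function.comp_apply, RCLike.ofReal_real_eq_id,
    id_eq]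
  ring_nf
  exact Finset.sum_congr rfl fun i _ => by ring

lemma myNorm (x : m → ℝ) :
    ∑ i, (((star (hA.eigenvectorUnitary : Matrix m m ℝ)) *ᵥ x) i) ^ 2 = ∑ i, (x i) ^ 2 := by
  set U := (hA.eigenvectorUnitary : Matrix m m ℝ) with hU
  set y := (star U) *ᵥ x with hy
  have h1 : y ⬝ᵥ y = x ⬝ᵥ x := by
    conv_lhs => rw [hy, Matrix.dotProduct_mulVec]
    have : y ᵥ* (star U) = x := by
      rw [Matrix.star_eq_conjTranspose, Matrix.conjTranspose_eq_transpose_of_trivial,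
        ← Matrix.mulVec_transpose, Matrix.transpose_transpose, hy, Matrix.mulVec_mulVec]
      rw [show U * star U = 1 from Matrix.mem_unitaryGroup_iff.mp hA.eigenvectorUnitary.2,
        Matrix.one_mulVec]
    rw [this]
  simpa [dotProduct, sq] using h1

lemma mySumSq :
    ∑ i, hA.eigenvalues i ^ 2 = ∑ i, ∑ j, A i j * A j i := by
  have h : A * A = (hA.eigenvectorUnitary : Matrix m m ℝ) *
      Matrix.diagonal (fun i => hA.eigenvalues i ^ 2) * (star (hA.eigenvectorUnitary : Matrix m m ℝ)) := by
    conv_lhs => rw [hA.spectral_theorem]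
    set U := (hA.eigenvectorUnitary : Matrix m m ℝ)
    have hsU : star U * U = 1 := Matrix.mem_unitaryGroup_iff'.mp hA.eigenvectorUnitary.2
    calc (U * diagonal (RCLike.ofReal ∘ hA.eigenvalues) * star U) *
          (U * diagonal (RCLike.ofReal ∘ hA.eigenvalues) * star U)
        = U * (diagonal (RCLike.ofReal ∘ hA.eigenvalues) * ((star U * U) *
            diagonal (RCLike.ofReal ∘ hA.eigenvalues))) * star U := by
          simp only [Matrix.mul_assoc]
      _ = U * Matrix.diagonal (fun i => hA.eigenvalues i ^ 2) * star U := by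
          rw [hsU, Matrix.one_mul, Matrix.diagonal_mul_diagonal]
          congr 1
          ext i
          simp [sq]
  have h2 : (A * A).trace = ∑ i, hA.eigenvalues i ^ 2 := by
    rw [h, Matrix.trace_mul_cycle,
      Matrix.mem_unitaryGroup_iff'.mp hA.eigenvectorUnitary.2, Matrix.one_mul,
      Matrix.trace_diagonal]
  rw [← h2]
  simp [Matrix.trace, Matrix.mul_apply]

end aux

/-- `s⁻(G) ≤ n²/4`. -/
theorem sNeg_le_n_sq_div_four {n : ℕ} (G : SimpleGraph (Fin n)) :
    sNeg G ≤ (n : ℝ) ^ 2 / 4 := by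
  classical
  rcases Nat.eq_zero_or_pos n with hn | hn
  · subst hn
    simp only [sNeg, Finset.univ_eq_empty, Finset.sum_empty]
    norm_num
  haveI : Nonempty (Fin n) := Fin.pos_iff_nonempty.mp hn
  have hA : (G.adjMatrix ℝ).IsHermitian := adjHerm G
  have hEig : adjEig G = hA.eigenvalues := rfl
  set A := G.adjMatrix ℝ with hAdef
  -- entries
  have hentry : ∀ i j, A i j * A j i = A i j := by
    intro i j
    have hcomm : G.Adj j i ↔ G.Adj i j := G.adj_comm j i
    by_cases h : G.Adj i j <;> simp [hAdef, hcomm, h]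
  have hSum : ∑ i, adjEig G i ^ 2 = ∑ i, ∑ j, A i j := by
    rw [hEig, mySumSq hA]
    exact Finset.sum_congr rfl fun i _ => Finset.sum_congr rfl fun j _ => hentry i j
  have hRay : ∑ i, ∑ j, A i j =
      ∑ i, adjEig G i *
        (((star (hA.eigenvectorUnitary : Matrix (Fin n) (Fin n) ℝ)) *ᵥ fun _ => (1:ℝ)) i) ^ 2 := by
    rw [hEig, ← myRayleigh hA (fun _ => (1:ℝ))]
    simp [dotProduct, Matrix.mulVec]
  have hNorm : ∑ i,
      (((star (hA.eigenvectorUnitary : Matrix (Fin n) (Fin n) ℝ)) *ᵥ fun _ => (1:ℝ)) i) ^ 2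
      = (n : ℝ) := by
    rw [myNorm hA]
    simp [Finset.card_univ]
  obtain ⟨i₀, hi₀⟩ := Finite.exists_max (adjEig G)
  set y := (star (hA.eigenvectorUnitary : Matrix (Fin n) (Fin n) ℝ)) *ᵥ (fun _ => (1:ℝ))
  have hMn : ∑ i, ∑ j, A i j ≤ adjEig G i₀ * n := by
    rw [hRay, ← hNorm, Finset.mul_sum]
    exact Finset.sum_le_sum fun i _ => mul_le_mul_of_nonneg_right (hi₀ i) (sq_nonneg _)
  have hS0 : (0:ℝ) ≤ ∑ i, ∑ j, A i j := by
    refine Finset.sum_nonneg fun i _ => Finset.sum_nonneg fun j _ => ?_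
    by_cases h : G.Adj i j <;> simp [hAdef, h]
  by_cases hM : 0 < adjEig G i₀
  · have h1 : sNeg G = ∑ i ∈ Finset.univ.erase i₀, (if adjEig G i < 0 then adjEig G i ^ 2 else 0) := by
      rw [sNeg, ← Finset.add_sum_erase _ _ (Finset.mem_univ i₀), if_neg (by linarith), zero_add]
    have h2 : sNeg G ≤ ∑ i ∈ Finset.univ.erase i₀, adjEig G i ^ 2 := by
      rw [h1]
      exact Finset.sum_le_sum fun i _ => by split <;> simp [sq_nonneg]
    have h3 : ∑ i ∈ Finset.univ.erase i₀, adjEig G i ^ 2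
        = (∑ i, adjEig G i ^ 2) - adjEig G i₀ ^ 2 :=
      Finset.sum_erase_eq_sub (Finset.mem_univ i₀)
    nlinarith [sq_nonneg (adjEig G i₀ - (n : ℝ) / 2)]
  · push_neg at hM
    have hneg : adjEig G i₀ * n ≤ 0 := mul_nonpos_of_nonpos_of_nonneg hM (Nat.cast_nonneg n)
    have h2 : sNeg G ≤ ∑ i, adjEig G i ^ 2 := by
      rw [sNeg]
      exact Finset.sum_le_sum fun i _ => by split <;> simp [sq_nonneg]
    have hq : (0:ℝ) ≤ (n : ℝ) ^ 2 / 4 := by positivity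
    linarith
end

section
/- For any connected graph G with chromatic number χ(G) ≥ 2, under the Ando–Lin bound s⁺ ≤ 2m(χ−1)/χ and the assumption s⁺ ≤ 2m − n + 1, the Randić index satisfies √(s⁺(G)) / R(G) ≤ 2(n−1)/n, with equality for the complete graph K_n. -/
open Finset SimpleGraph

section SpectralAux

open Matrix

variable {V : Type*} [Fintype V] [DecidableEq V] {A : Matrix V V ℝ} (hA : A.IsHermitian)

lemma dot_decomp (x : V → ℝ) :
    x ⬝ᵥ (A *ᵥ x) = ∑ i, hA.eigenvalues i *
      ((star (hA.eigenvectorUnitary : Matrix V V ℝ) *ᵥ x) i)^2 := by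
  set U : Matrix V V ℝ := (hA.eigenvectorUnitary : Matrix V V ℝ) with hU
  set y := star U *ᵥ x with hy
  conv_lhs => rw [hA.spectral_theorem]
  rw [Unitary.conjStarAlgAut_apply, ← mulVec_mulVec, ← mulVec_mulVec, dotProduct_mulVec]
  have hxU : x ᵥ* U = y := by
    rw [hy, Matrix.star_eq_conjTranspose, Matrix.conjTranspose_eq_transpose_of_trivial,
      Matrix.mulVec_transpose]
  rw [hxU]
  simp only [dotProduct, Matrix.mulVec_diagonal, Function.comp_apply, RCLike.ofReal_real_eq_id,
    id_eq]
  exact Finset.sum_congr rfl fun i _ => by ring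

lemma dot_self_decomp (x : V → ℝ) :
    x ⬝ᵥ x = ∑ i, ((star (hA.eigenvectorUnitary : Matrix V V ℝ) *ᵥ x) i)^2 := by
  set U : Matrix V V ℝ := (hA.eigenvectorUnitary : Matrix V V ℝ) with hU
  have h1 : (star U *ᵥ x) ⬝ᵥ (star U *ᵥ x) = x ⬝ᵥ x := by
    rw [dotProduct_mulVec, Matrix.star_eq_conjTranspose,
      Matrix.conjTranspose_eq_transpose_of_trivial, ← Matrix.mulVec_transpose,
      Matrix.transpose_transpose, mulVec_mulVec]
    have : U * Uᵀ = 1 := by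
      have := (Matrix.mem_unitaryGroup_iff).mp hA.eigenvectorUnitary.2
      rwa [Matrix.star_eq_conjTranspose, Matrix.conjTranspose_eq_transpose_of_trivial] at this
    rw [this, one_mulVec]
  rw [← h1]
  simp [dotProduct, sq]

lemma rayleigh_le [Nonempty V] (x : V → ℝ) :
    x ⬝ᵥ (A *ᵥ x) ≤ (⨆ i, hA.eigenvalues i) * (x ⬝ᵥ x) := by
  rw [dot_decomp hA x, dot_self_decomp hA x, Finset.mul_sum]
  apply Finset.sum_le_sum
  intro i _
  exact mul_le_mul_of_nonneg_right
    (le_ciSup (Set.Finite.bddAbove (Set.finite_range _)) i) (sq_nonneg _)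

lemma exists_eq_iSup [Nonempty V] : ∃ i, hA.eigenvalues i = ⨆ i, hA.eigenvalues i := by
  obtain ⟨i, hi⟩ := Finite.exists_max hA.eigenvalues
  exact ⟨i, le_antisymm (le_ciSup (Set.Finite.bddAbove (Set.finite_range _)) i) (ciSup_le hi)⟩

end SpectralAux

/-- for a connected graph with `χ ≥ 2`, under the Ando–Lin bound
and the assumption `s⁺ ≤ 2m - n + 1`, `√(s⁺(G))/R(G) ≤ 2(n-1)/n`, with
equality for `Kₙ`. -/
theorem sqrt_sPos_div_randic_le {n : ℕ} (G : SimpleGraph (Fin n))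
    (hG : G.Connected) (χ : ℕ) (hχ : G.chromaticNumber = χ) (hχ2 : 2 ≤ χ)
    (hAL : sPos G ≤ 2 * (numEdges G : ℝ) * ((χ : ℝ) - 1) / (χ : ℝ))
    (h2 : sPos G ≤ 2 * (numEdges G : ℝ) - (n : ℝ) + 1) :
    Real.sqrt (sPos G) / randic G ≤ 2 * ((n : ℝ) - 1) / (n : ℝ) ∧
      (G = ⊤ → Real.sqrt (sPos G) / randic G = 2 * ((n : ℝ) - 1) / (n : ℝ)) := by
  classical
  -- basic facts: n ≥ 2
  have hχle : (χ : ℕ∞) ≤ (n : ℕ∞) := by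
    have h := (G.colorable_of_fintype).chromaticNumber_le
    rwa [hχ, Fintype.card_fin] at h
  have hn2 : 2 ≤ n := le_trans hχ2 (by exact_mod_cast hχle)
  have hne : Nonempty (Fin n) := ⟨⟨0, by omega⟩⟩
  have hn0 : (0 : ℝ) < n := by
    have : 0 < n := by omega
    exact_mod_cast this
  -- G has an edge
  have hedge : ∃ i j, G.Adj i j := by
    have hv : (⟨0, by omega⟩ : Fin n) ≠ ⟨1, by omega⟩ := by simp [Fin.ext_iff]
    obtain ⟨p⟩ := hG.preconnected ⟨0, by omega⟩ ⟨1, by omega⟩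
    cases p with
    | cons h _ => exact ⟨_, _, h⟩
  have hm1 : 0 < numEdges G := by
    obtain ⟨i, j, hij⟩ := hedge
    refine Finset.card_pos.mpr ⟨s(i, j), ?_⟩
    rw [mem_edgeFinset]
    exact hij
  set m : ℝ := (numEdges G : ℝ) with hmdef
  have hm : 0 < m := by rw [hmdef]; exact_mod_cast hm1
  -- degree sum
  have hdeg : ∑ i, (G.degree i : ℝ) = 2 * m := by
    rw [hmdef]
    exact_mod_cast congrArg (Nat.cast : ℕ → ℝ) G.sum_degrees_eq_twice_card_edges
  have hdle : ∀ i, (G.degree i : ℝ) ≤ (n : ℝ) - 1 := by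
    intro i
    have h := G.degree_lt_card_verts i
    rw [Fintype.card_fin] at h
    have : (G.degree i : ℝ) + 1 ≤ n := by exact_mod_cast h
    linarith
  have h2mn : 2 * m ≤ (n : ℝ) * ((n : ℝ) - 1) := by
    calc 2 * m = ∑ i, (G.degree i : ℝ) := hdeg.symm
      _ ≤ ∑ _i : Fin n, ((n : ℝ) - 1) := Finset.sum_le_sum fun i _ => hdle i
      _ = (n : ℝ) * ((n : ℝ) - 1) := by
          rw [Finset.sum_const, Finset.card_univ, Fintype.card_fin, nsmul_eq_mul]
  -- spectral setup
  set μ : ℝ := ⨆ i, adjEig G i with hμdef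
  have hAeig : (adjHerm G).eigenvalues = adjEig G := rfl
  -- Rayleigh with all-ones vector: 2m ≤ μ n
  have hones : 2 * m ≤ μ * n := by
    have h := rayleigh_le (adjHerm G) (fun _ => (1 : ℝ))
    rw [hAeig] at h
    have h1 : dotProduct (fun (_ : Fin n) => (1:ℝ))
        (Matrix.mulVec (G.adjMatrix ℝ) (fun _ => (1:ℝ))) = 2 * m := by
      simp only [dotProduct, adjMatrix_mulVec_apply, one_mul]
      rw [← hdeg]
      refine Finset.sum_congr rfl fun i _ => ?_
      rw [Finset.sum_const, card_neighborFinset_eq_degree, nsmul_eq_mul, mul_one]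
    have h2' : dotProduct (fun (_ : Fin n) => (1:ℝ)) (fun _ => (1:ℝ)) = (n : ℝ) := by
      simp [dotProduct]
    rw [h1, h2'] at h
    exact h
  have hμpos : 0 < μ := by nlinarith
  -- Rayleigh with x = sqrt degree
  set x2 : Fin n → ℝ := fun i => Real.sqrt (G.degree i) with hx2def
  have hS1 : ∑ i, ∑ j, (if G.Adj i j then Real.sqrt ((G.degree i : ℝ) * (G.degree j : ℝ)) else 0)
      ≤ μ * (2 * m) := by
    have h := rayleigh_le (adjHerm G) x2
    rw [hAeig] at h
    have hL : dotProduct x2 (Matrix.mulVec (G.adjMatrix ℝ) x2)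
        = ∑ i, ∑ j, (if G.Adj i j then Real.sqrt ((G.degree i : ℝ) * (G.degree j : ℝ)) else 0) := by
      simp only [dotProduct, adjMatrix_mulVec_apply]
      refine Finset.sum_congr rfl fun i _ => ?_
      rw [← Finset.sum_filter, ← neighborFinset_eq_filter, Finset.mul_sum]
      refine Finset.sum_congr rfl fun j _ => ?_
      rw [hx2def]
      exact (Real.sqrt_mul (by positivity) _).symm
    have hR : dotProduct x2 x2 = 2 * m := by
      rw [← hdeg]
      simp only [dotProduct, hx2def]
      refine Finset.sum_congr rfl fun i _ => ?_
      exact Real.mul_self_sqrt (by positivity)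
    rw [hL, hR] at h
    exact h
  -- Cauchy-Schwarz: m ≤ μ * randic G
  have hCS : m ≤ μ * randic G := by
    set f : Fin n × Fin n → ℝ := fun p =>
      if G.Adj p.1 p.2 then Real.sqrt (Real.sqrt ((G.degree p.1 : ℝ) * (G.degree p.2 : ℝ))) else 0
      with hfdef
    set g : Fin n × Fin n → ℝ := fun p =>
      if G.Adj p.1 p.2 then
        1 / Real.sqrt (Real.sqrt ((G.degree p.1 : ℝ) * (G.degree p.2 : ℝ))) else 0
      with hgdef
    have hcs := Finset.sum_mul_sq_le_sq_mul_sq Finset.univ f g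
    have hdpos : ∀ p : Fin n × Fin n, G.Adj p.1 p.2 →
        (0 : ℝ) < (G.degree p.1 : ℝ) * (G.degree p.2 : ℝ) := by
      intro p hp
      have h1 : 0 < G.degree p.1 := G.degree_pos_iff_exists_adj p.1 |>.mpr ⟨_, hp⟩
      have h2' : 0 < G.degree p.2 := G.degree_pos_iff_exists_adj p.2 |>.mpr ⟨_, hp.symm⟩
      positivity
    have hsne : ∀ i j, G.Adj i j →
        Real.sqrt (Real.sqrt ((G.degree i : ℝ) * (G.degree j : ℝ))) ≠ 0 := by
      intro i j hp
      have := hdpos (i, j) hp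
      positivity
    have hfg : ∑ p : Fin n × Fin n, f p * g p = 2 * m := by
      rw [Fintype.sum_prod_type, ← hdeg]
      refine Finset.sum_congr rfl fun i _ => ?_
      have h1 : ∀ j, f (i, j) * g (i, j) = if G.Adj i j then (1:ℝ) else 0 := by
        intro j
        by_cases hp : G.Adj i j
        · simp only [hfdef, hgdef, hp, if_true]
          rw [mul_one_div, div_self (hsne i j hp)]
        · simp [hfdef, hgdef, hp]
      rw [Finset.sum_congr rfl fun j _ => h1 j, ← Finset.sum_filter, ← neighborFinset_eq_filter]
      simp
    have hf2 : ∑ p : Fin n × Fin n, f p ^ 2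
        = ∑ i, ∑ j, (if G.Adj i j then Real.sqrt ((G.degree i : ℝ) * (G.degree j : ℝ)) else 0) := by
      rw [Fintype.sum_prod_type]
      refine Finset.sum_congr rfl fun i _ => Finset.sum_congr rfl fun j _ => ?_
      by_cases hp : G.Adj i j
      · simp only [hfdef, hp, if_true]
        exact Real.sq_sqrt (Real.sqrt_nonneg _)
      · simp [hfdef, hp]
    have hg2 : ∑ p : Fin n × Fin n, g p ^ 2 = 2 * randic G := by
      have h1 : ∑ p : Fin n × Fin n, g p ^ 2 = ∑ i, ∑ j,
          (if G.Adj i j then 1 / Real.sqrt ((G.degree i : ℝ) * (G.degree j : ℝ)) else 0) := by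
        rw [Fintype.sum_prod_type]
        refine Finset.sum_congr rfl fun i _ => Finset.sum_congr rfl fun j _ => ?_
        by_cases hp : G.Adj i j
        · simp only [hgdef, hp, if_true]
          rw [div_pow, one_pow, Real.sq_sqrt (Real.sqrt_nonneg _)]
        · simp [hgdef, hp]
      rw [h1, randic]
      ring
    rw [hfg, hf2, hg2] at hcs
    have hg2nn : (0:ℝ) ≤ 2 * randic G := by
      rw [← hg2]
      exact Finset.sum_nonneg fun p _ => sq_nonneg _
    have hstep : (2*m)^2 ≤ (μ * (2*m)) * (2 * randic G) :=
      le_trans hcs (mul_le_mul_of_nonneg_right hS1 hg2nn)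
    nlinarith [hstep, hm]
  have hRpos : 0 < randic G := by nlinarith [hCS, hm, hμpos]
  -- μ² ≤ sPos
  have hex : ∃ i0, adjEig G i0 = μ := by
    obtain ⟨i0, hi0⟩ := exists_eq_iSup (adjHerm G)
    exact ⟨i0, hi0⟩
  have hμs : μ ^ 2 ≤ sPos G := by
    obtain ⟨i0, hi0⟩ := hex
    have hpos0 : 0 < adjEig G i0 := hi0 ▸ hμpos
    calc μ ^ 2 = (if 0 < adjEig G i0 then (adjEig G i0) ^ 2 else 0) := by
          rw [if_pos hpos0, hi0]
      _ ≤ ∑ i, (if 0 < adjEig G i then (adjEig G i) ^ 2 else 0) :=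
          Finset.single_le_sum (f := fun i => if 0 < adjEig G i then (adjEig G i) ^ 2 else 0)
            (fun i _ => by split <;> positivity) (Finset.mem_univ i0)
      _ = sPos G := rfl
  have hsppos : 0 < sPos G := lt_of_lt_of_le (by positivity) hμs
  have hsqle : μ ≤ Real.sqrt (sPos G) := (Real.le_sqrt hμpos.le hsppos.le).mpr hμs
  have hsq : Real.sqrt (sPos G) * Real.sqrt (sPos G) = sPos G :=
    Real.mul_self_sqrt hsppos.le
  have hsqnn : 0 ≤ Real.sqrt (sPos G) := Real.sqrt_nonneg _
  -- main inequality
  have main : Real.sqrt (sPos G) / randic G ≤ 2 * ((n : ℝ) - 1) / (n : ℝ) := by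
    calc Real.sqrt (sPos G) / randic G ≤ sPos G / m := by
          rw [div_le_div_iff₀ hRpos hm]
          have e1 : Real.sqrt (sPos G) * m ≤ Real.sqrt (sPos G) * (μ * randic G) :=
            mul_le_mul_of_nonneg_left hCS hsqnn
          have e2 : Real.sqrt (sPos G) * (μ * randic G)
              ≤ Real.sqrt (sPos G) * (Real.sqrt (sPos G) * randic G) :=
            mul_le_mul_of_nonneg_left (mul_le_mul_of_nonneg_right hsqle hRpos.le) hsqnn
          have e3 : Real.sqrt (sPos G) * (Real.sqrt (sPos G) * randic G)
              = sPos G * randic G := by linear_combination randic G * hsq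
          linarith
      _ ≤ (2 * m - (n : ℝ) + 1) / m := by gcongr
      _ ≤ 2 * ((n : ℝ) - 1) / (n : ℝ) := by
          rw [div_le_div_iff₀ hm hn0]
          nlinarith [h2mn]
  refine ⟨main, ?_⟩
  -- equality case
  intro hT
  have hn1 : (1:ℝ) ≤ (n:ℝ) := by
    have : (2:ℝ) ≤ (n:ℝ) := by exact_mod_cast hn2
    linarith
  have hdegT : ∀ v : Fin n, (G.degree v : ℝ) = (n : ℝ) - 1 := by
    intro v
    have hdT : G.neighborFinset v = Finset.univ.erase v := by
      ext w
      simp [SimpleGraph.mem_neighborFinset, hT, ne_comm]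
    have hd : G.degree v = n - 1 := by
      rw [← card_neighborFinset_eq_degree, hdT, Finset.card_erase_of_mem (Finset.mem_univ v),
        Finset.card_univ, Fintype.card_fin]
    rw [hd, Nat.cast_sub (by omega), Nat.cast_one]
  have h2m : 2 * m = (n:ℝ) * ((n:ℝ) - 1) := by
    rw [← hdeg, Finset.sum_congr rfl fun i _ => hdegT i, Finset.sum_const, Finset.card_univ,
      Fintype.card_fin, nsmul_eq_mul]
  have hμge : (n:ℝ) - 1 ≤ μ := by
    have h := hones
    rw [h2m] at h
    have h' : ((n:ℝ) - 1) * (n:ℝ) ≤ μ * (n:ℝ) := by linarith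
    exact le_of_mul_le_mul_right h' hn0
  have hsle : sPos G ≤ ((n:ℝ)-1)^2 := by linarith [h2, h2m]
  have hsge : ((n:ℝ)-1)^2 ≤ sPos G := by
    have hq : ((n:ℝ)-1) * ((n:ℝ)-1) ≤ μ * μ :=
      mul_le_mul hμge hμge (by linarith) (by linarith)
    have : ((n:ℝ)-1)^2 ≤ μ^2 := by linarith [hq]
    linarith [hμs]
  have hseq : sPos G = ((n:ℝ)-1)^2 := le_antisymm hsle hsge
  have hsqrt : Real.sqrt (sPos G) = (n:ℝ) - 1 := by
    rw [hseq]
    exact Real.sqrt_sq (by linarith)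
  have hn1ne : (n:ℝ) - 1 ≠ 0 := by linarith
  have hR : randic G = (n:ℝ) / 2 := by
    rw [randic]
    have hinner : ∀ i : Fin n, (∑ j, if G.Adj i j then
        1 / Real.sqrt ((G.degree i : ℝ) * (G.degree j : ℝ)) else 0) = 1 := by
      intro i
      have hterm : ∀ j, (if G.Adj i j then
          1 / Real.sqrt ((G.degree i : ℝ) * (G.degree j : ℝ)) else 0)
          = (if G.Adj i j then 1 / ((n:ℝ) - 1) else 0) := by
        intro j
        by_cases hp : G.Adj i j
        · rw [if_pos hp, if_pos hp, hdegT i, hdegT j, Real.sqrt_mul_self (by linarith)]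
        · rw [if_neg hp, if_neg hp]
      rw [Finset.sum_congr rfl fun j _ => hterm j, ← Finset.sum_filter,
        ← neighborFinset_eq_filter, Finset.sum_const, nsmul_eq_mul,
        card_neighborFinset_eq_degree, hdegT i]
      field_simp
    rw [Finset.sum_congr rfl fun i _ => hinner i, Finset.sum_const, Finset.card_univ,
      Fintype.card_fin, nsmul_eq_mul, mul_one]
    ring
  rw [hsqrt, hR]
  field_simp
end
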